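/- arXiv:1605.08542 — 8 statements merged into one kernel-verified Lean document; each statement's English description precedes it below -/
import Mathlib

section
/- Let n ≥ 1 and let w_{ij} ≥ 0 for i, j ∈ {0, 1, …, n} with w_{ii} = 0 for all i. Assume that for each i ∈ {1, …, n} the row sum ϖ_i := Σ_{j=0}^{n} w_{ij} is strictly positive, and that for each i ∈ {1, …, n} there exists a finite sequence i = i₀, i₁, …, i_q of indices in {1, …, n} with w_{i_l i_{l+1}} > 0 for all 0 ≤ l < q and w_{i_q 0} > 0 (i.e., the digraph with an edge from j to i whenever w_{ij} > 0 contains a spanning tree rooted at node 0). Define the n×n matrix D by D_{ij} = w_{ij}/ϖ_i for i, j ∈ {1, …, n}. Then ‖Dⁿ‖_∞ < 1, where ‖·‖_∞ denotes the maximum absolute row sum; in particular every complex eigenvalue of D has modulus strictly less than 1. -/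
open Finset

/-- If a property fails at `0` and holds at `q`, there's a first transition. -/
lemma exists_transition (P : ℕ → Prop) (q : ℕ) (h0 : ¬ P 0) (hq : P q) :
    ∃ l, l + 1 ≤ q ∧ ¬ P l ∧ P (l + 1) := by
  induction q with
  | zero => exact absurd hq h0
  | succ q ih =>
    by_cases h : P q
    · obtain ⟨l, hl, h1, h2⟩ := ih h
      exact ⟨l, hl.trans (Nat.le_succ q), h1, h2⟩
    · exact ⟨q, le_refl _, h, hq⟩

/-- Lemma 1 of the paper: under the spanning-tree assumption on the sampled interaction
graph, the normalized adjacency matrix `D = B⁻¹ Ŵ` satisfies `‖Dⁿ‖_∞ < 1` (every absolute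
row sum of `Dⁿ` is `< 1`), hence every complex eigenvalue of `D` has modulus `< 1`. -/
theorem stmt_1 (n : ℕ) (hn : 1 ≤ n) (w : Fin (n + 1) → Fin (n + 1) → ℝ)
    (hw : ∀ i j, 0 ≤ w i j) (hdiag : ∀ i, w i i = 0)
    (hrow : ∀ i : Fin n, 0 < ∑ j, w i.succ j)
    (htree : ∀ i : Fin n, ∃ (q : ℕ) (c : ℕ → Fin n), c 0 = i ∧
      (∀ l < q, 0 < w (c l).succ (c (l + 1)).succ) ∧ 0 < w (c q).succ 0)
    (D : Matrix (Fin n) (Fin n) ℝ)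
    (hD : ∀ i j, D i j = w i.succ j.succ / ∑ l, w i.succ l) :
    (∀ i, ∑ j, |(D ^ n) i j| < 1) ∧
      (∀ z ∈ (D.map (fun x => (x : ℂ))).charpoly.roots, ‖z‖ < 1) := by
  classical
  -- basic entry facts
  have hDnn : ∀ i j, 0 ≤ D i j := fun i j => by
    rw [hD]; exact div_nonneg (hw _ _) (le_of_lt (hrow i))
  have hDpos : ∀ i j, 0 < w i.succ j.succ → 0 < D i j := fun i j h => by
    rw [hD]; exact div_pos h (hrow i)
  have hsum_split : ∀ i : Fin n, ∑ l, w i.succ l = w i.succ 0 + ∑ j : Fin n, w i.succ j.succ :=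
    fun i => Fin.sum_univ_succ _
  have hrowD : ∀ i, ∑ j, D i j ≤ 1 := fun i => by
    have : ∑ j, D i j = (∑ j : Fin n, w i.succ j.succ) / ∑ l, w i.succ l := by
      simp only [hD]; rw [Finset.sum_div]
    rw [this, div_le_one (hrow i), hsum_split i]
    nlinarith [hw i.succ 0]
  have hrowD1 : ∀ i, 0 < w i.succ 0 → ∑ j, D i j < 1 := fun i h0 => by
    have : ∑ j, D i j = (∑ j : Fin n, w i.succ j.succ) / ∑ l, w i.succ l := by
      simp only [hD]; rw [Finset.sum_div]
    rw [this, div_lt_one (hrow i), hsum_split i]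
    nlinarith
  -- nonnegativity of powers
  have hPnn : ∀ k i j, 0 ≤ (D ^ k) i j := by
    intro k
    induction k with
    | zero =>
      intro i j; rw [pow_zero, Matrix.one_apply]
      split <;> norm_num
    | succ k ih =>
      intro i j
      rw [pow_succ, Matrix.mul_apply]
      exact Finset.sum_nonneg fun m _ => mul_nonneg (ih i m) (hDnn m j)
  -- row sums of powers
  set s : ℕ → Fin n → ℝ := fun k i => ∑ j, (D ^ k) i j with hs
  have hs0 : ∀ i, s 0 i = 1 := fun i => by
    simp [hs, Matrix.one_apply]
  have hrec : ∀ k i, s (k + 1) i = ∑ m, D i m * s k m := fun k i => by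
    show (∑ j, (D ^ (k + 1)) i j) = _
    simp only [pow_succ', Matrix.mul_apply]
    rw [Finset.sum_comm]
    simp only [hs, Finset.mul_sum]
  have hrec' : ∀ k i, s (k + 1) i = ∑ m, (D ^ k) i m * s 1 m := fun k i => by
    show (∑ j, (D ^ (k + 1)) i j) = _
    simp only [pow_succ, Matrix.mul_apply]
    rw [Finset.sum_comm]
    simp only [hs, pow_one, Finset.mul_sum]
  have hsle : ∀ k i, s k i ≤ 1 := by
    intro k
    induction k with
    | zero => intro i; rw [hs0]
    | succ k ih =>
      intro i
      rw [hrec]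
      calc ∑ m, D i m * s k m ≤ ∑ m, D i m := by
            apply Finset.sum_le_sum
            intro m _
            exact mul_le_of_le_one_right (hDnn i m) (ih m)
        _ ≤ 1 := hrowD i
  have hmono : ∀ k i, s (k + 1) i ≤ s k i := fun k i => by
    rw [hrec']
    calc ∑ m, (D ^ k) i m * s 1 m ≤ ∑ m, (D ^ k) i m := by
          apply Finset.sum_le_sum
          intro m _
          exact mul_le_of_le_one_right (hPnn k i m) (hsle 1 m)
      _ = s k i := rfl
  have hprop : ∀ k i j, 0 < D i j → s k j < 1 → s (k + 1) i < 1 := by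
    intro k i j hij hj
    rw [hrec]
    calc ∑ m, D i m * s k m < ∑ m, D i m := by
          apply Finset.sum_lt_sum
          · intro m _
            exact mul_le_of_le_one_right (hDnn i m) (hsle k m)
          · exact ⟨j, Finset.mem_univ j, by nlinarith⟩
      _ ≤ 1 := hrowD i
  have hS1 : ∀ i, 0 < w i.succ 0 → s 1 i < 1 := fun i h => by
    have : s 1 i = ∑ j, D i j := by simp [hs]
    rw [this]; exact hrowD1 i h
  -- the growing set
  set S : ℕ → Finset (Fin n) := fun k => Finset.univ.filter (fun i => s k i < 1) with hSdef
  have hmemS : ∀ k i, i ∈ S k ↔ s k i < 1 := fun k i => by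
    simp [hSdef]
  have hSmono : ∀ k, S k ⊆ S (k + 1) := by
    intro k i hi
    rw [hmemS] at hi ⊢
    exact lt_of_le_of_lt (hmono k i) hi
  have hSmono' : ∀ j k, j ≤ k → S j ⊆ S k := by
    intro j k hjk
    induction hjk with
    | refl => exact Finset.Subset.refl _
    | step h ih => exact ih.trans (hSmono _)
  haveI : Nonempty (Fin n) := ⟨⟨0, hn⟩⟩
  have hcard : ∀ k, S k = Finset.univ ∨ k ≤ (S k).card := by
    intro k
    induction k with
    | zero => right; exact Nat.zero_le _
    | succ k ih =>
      by_cases hU : S k = Finset.univ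
      · left
        have h := hSmono k
        rw [hU] at h
        exact Finset.univ_subset_iff.1 h
      · have hk : k ≤ (S k).card := ih.resolve_left hU
        right
        -- find i ∉ S k
        have : ∃ i, i ∉ S k := by
          by_contra h
          push_neg at h
          exact hU (Finset.eq_univ_iff_forall.2 h)
        obtain ⟨i, hi⟩ := this
        obtain ⟨q, c, hc0, hpath, hend⟩ := htree i
        -- the endpoint c q is in S (k+1), more precisely in S (max k 1)
        have hcq1 : c q ∈ S 1 := (hmemS 1 (c q)).2 (hS1 (c q) hend)
        rcases Nat.eq_zero_or_pos k with hk0 | hk1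
        · -- k = 0 : just need 1 ≤ card (S 1)
          subst hk0
          exact Finset.card_pos.2 ⟨c q, hcq1⟩
        · have hcqk : c q ∈ S k := hSmono' 1 k hk1 hcq1
          have hnc0 : ¬ c 0 ∈ S k := by rw [hc0]; exact hi
          obtain ⟨l, hlq, hl1, hl2⟩ := exists_transition (fun l => c l ∈ S k) q hnc0 hcqk
          have hlt : l < q := hlq
          have hDpos' : 0 < D (c l) (c (l + 1)) := hDpos _ _ (hpath l hlt)
          have hclS : c l ∈ S (k + 1) :=
            (hmemS _ _).2 (hprop k (c l) (c (l + 1)) hDpos' ((hmemS _ _).1 hl2))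
          have hss : S k ⊂ S (k + 1) :=
            Finset.ssubset_iff_of_subset (hSmono k) |>.2 ⟨c l, hclS, hl1⟩
          exact Nat.succ_le_of_lt (lt_of_le_of_lt hk (Finset.card_lt_card hss))
  have hSn : ∀ i, s n i < 1 := by
    intro i
    rcases hcard n with hU | hc
    · exact (hmemS n i).1 (hU ▸ Finset.mem_univ i)
    · have : S n = Finset.univ := by
        apply Finset.eq_univ_of_card
        have h1 : (S n).card ≤ Fintype.card (Fin n) := Finset.card_le_univ _
        rw [Fintype.card_fin] at h1 ⊢
        omega
      exact (hmemS n i).1 (this ▸ Finset.mem_univ i)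
  -- Part 1
  have part1 : ∀ i, ∑ j, |(D ^ n) i j| < 1 := by
    intro i
    have : ∑ j, |(D ^ n) i j| = s n i := by
      apply Finset.sum_congr rfl
      intro j _
      exact abs_of_nonneg (hPnn n i j)
    rw [this]; exact hSn i
  refine ⟨part1, ?_⟩
  -- Part 2
  intro z hz
  set M : Matrix (Fin n) (Fin n) ℂ := D.map (fun x => (x : ℂ)) with hM
  have hroot : M.charpoly.IsRoot z := Polynomial.isRoot_of_mem_roots hz
  -- det (diagonal z - M) = 0
  have hmapc : (M.charmatrix).map (Polynomial.evalRingHom z)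
      = Matrix.diagonal (fun _ : Fin n => z) - M := by
    ext i j
    by_cases h : i = j
    · subst h
      simp [Matrix.charmatrix_apply_eq, Matrix.sub_apply]
    · simp [Matrix.charmatrix_apply_ne _ _ _ h, Matrix.sub_apply, Matrix.diagonal_apply_ne _ h]
  have hdet : (Matrix.diagonal (fun _ : Fin n => z) - M).det = 0 := by
    rw [← hmapc, ← RingHom.mapMatrix_apply, ← RingHom.map_det]
    simpa [Matrix.charpoly] using hroot
  obtain ⟨v, hv0, hveq⟩ := Matrix.exists_mulVec_eq_zero_iff.2 hdet
  have hev : M.mulVec v = z • v := by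
    rw [Matrix.sub_mulVec, sub_eq_zero] at hveq
    rw [← hveq]
    funext i
    rw [Matrix.mulVec_diagonal]
    simp [smul_eq_mul]
  have hpow : ∀ k, (M ^ k).mulVec v = z ^ k • v := by
    intro k
    induction k with
    | zero => simp
    | succ k ih =>
      rw [pow_succ', ← Matrix.mulVec_mulVec, ih, Matrix.mulVec_smul, hev, smul_smul, ← pow_succ]
  have hmapP : M ^ n = (D ^ n).map (fun x => (x : ℂ)) := by
    have h1 : M = Complex.ofRealHom.mapMatrix D := by
      rw [RingHom.mapMatrix_apply, hM]; rfl
    rw [h1, ← map_pow, RingHom.mapMatrix_apply]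
    rfl
  obtain ⟨i0, -, hmax⟩ := Finset.exists_max_image Finset.univ
    (fun i => ‖v i‖) Finset.univ_nonempty
  have hipos : 0 < ‖v i0‖ := by
    by_contra h
    push_neg at h
    apply hv0
    funext j
    have h2 := (hmax j (Finset.mem_univ j)).trans h
    exact norm_eq_zero.1 (le_antisymm h2 (norm_nonneg _))
  have hkey : ‖z ^ n‖ * ‖v i0‖ < 1 * ‖v i0‖ := by
    have h1 : ((M ^ n).mulVec v) i0 = z ^ n * v i0 := by
      rw [hpow n]; simp [smul_eq_mul]
    have h2 : ((M ^ n).mulVec v) i0 = ∑ j, (M ^ n) i0 j * v j := by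
      simp [Matrix.mulVec, dotProduct]
    calc ‖z ^ n‖ * ‖v i0‖
        = ‖z ^ n * v i0‖ := (norm_mul _ _).symm
      _ = ‖∑ j, (M ^ n) i0 j * v j‖ := by rw [← h1, h2]
      _ ≤ ∑ j, ‖(M ^ n) i0 j * v j‖ := norm_sum_le _ _
      _ = ∑ j, ‖(M ^ n) i0 j‖ * ‖v j‖ := by
          simp [map_mul]
      _ ≤ ∑ j, |(D ^ n) i0 j| * ‖v i0‖ := by
          apply Finset.sum_le_sum
          intro j _
          have habs : ‖(M ^ n) i0 j‖ = |(D ^ n) i0 j| := by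
            rw [hmapP]
            simp [Matrix.map_apply, Complex.norm_real]
          rw [habs]
          exact mul_le_mul_of_nonneg_left (hmax j (Finset.mem_univ j)) (abs_nonneg _)
      _ = (∑ j, |(D ^ n) i0 j|) * ‖v i0‖ := (Finset.sum_mul _ _ _).symm
      _ < 1 * ‖v i0‖ := mul_lt_mul_of_pos_right (part1 i0) hipos
  have hzn : ‖z‖ ^ n < 1 := by
    have := lt_of_mul_lt_mul_right hkey (norm_nonneg _)
    rwa [norm_pow] at this
  exact (pow_lt_one_iff_of_nonneg (norm_nonneg z) (Nat.one_le_iff_ne_zero.1 hn)).1 hzn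
end

section
/- Let p ∈ ℝ and q ∈ ℂ. Then every complex root z of the quadratic z² + p·z + q satisfies Re(z) < 0 if and only if p > 0 and p²·Re(q) > (Im(q))². -/
private lemma re_im_of_root (p : ℝ) (q z : ℂ) (hz : z ^ 2 + (p : ℂ) * z + q = 0) :
    z.re ^ 2 - z.im ^ 2 + p * z.re + q.re = 0 ∧
      2 * z.re * z.im + p * z.im + q.im = 0 := by
  have h1 := congrArg Complex.re hz
  have h2 := congrArg Complex.im hz
  simp [Complex.add_re, Complex.add_im, Complex.mul_re, Complex.mul_im, pow_two] at h1 h2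
  constructor <;> nlinarith [h1, h2]

/-- Hurwitz stability criterion for the monic complex quadratic `z² + pz + q` with
real linear coefficient `p`: every root has negative real part iff `p > 0` and
`p² Re(q) > (Im q)²`. -/
theorem stmt_5 (p : ℝ) (q : ℂ) :
    (∀ z : ℂ, z ^ 2 + (p : ℂ) * z + q = 0 → z.re < 0) ↔
      (0 < p ∧ p ^ 2 * q.re > q.im ^ 2) := by
  constructor
  · intro h
    obtain ⟨d, hd⟩ := IsAlgClosed.exists_pow_nat_eq ((p : ℂ) ^ 2 - 4 * q) (n := 2) (by norm_num)
    set r₁ : ℂ := (-(p : ℂ) + d) / 2 with hr1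
    set r₂ : ℂ := (-(p : ℂ) - d) / 2 with hr2
    have hroot₁ : r₁ ^ 2 + (p : ℂ) * r₁ + q = 0 := by
      rw [hr1]; ring_nf; linear_combination hd / 4
    have hroot₂ : r₂ ^ 2 + (p : ℂ) * r₂ + q = 0 := by
      rw [hr2]; ring_nf; linear_combination hd / 4
    have h1 := h r₁ hroot₁
    have h2 := h r₂ hroot₂
    have hre1 : r₁.re = (-p + d.re) / 2 := by simp [hr1]
    have hre2 : r₂.re = (-p - d.re) / 2 := by simp [hr2]
    have hp : 0 < p := by rw [hre1] at h1; rw [hre2] at h2; linarith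
    refine ⟨hp, ?_⟩
    obtain ⟨e1, e2⟩ := re_im_of_root p q r₁ hroot₁
    -- p² Re q - (Im q)² = -x(x+p)(p²+4y²) with x = r₁.re, y = r₁.im
    have hx : r₁.re < 0 := h1
    have hxp : 0 < r₁.re + p := by rw [hre1]; rw [hre2] at h2; linarith
    have key : p ^ 2 * q.re - q.im ^ 2 =
        -(r₁.re * (r₁.re + p) * (p ^ 2 + 4 * r₁.im ^ 2)) := by
      linear_combination p ^ 2 * e1 + (2 * r₁.re * r₁.im + p * r₁.im - q.im) * e2
    nlinarith [mul_pos (mul_pos (neg_pos.mpr hx) hxp) (by positivity : (0:ℝ) < p ^ 2 + 4 * r₁.im ^ 2)]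
  · rintro ⟨hp, hq⟩ z hz
    obtain ⟨e1, e2⟩ := re_im_of_root p q z hz
    by_contra hx
    push_neg at hx
    have key : p ^ 2 * q.re - q.im ^ 2 =
        -(z.re * (z.re + p) * (p ^ 2 + 4 * z.im ^ 2)) := by
      linear_combination p ^ 2 * e1 + (2 * z.re * z.im + p * z.im - q.im) * e2
    nlinarith [mul_nonneg (mul_nonneg hx (by linarith : (0:ℝ) ≤ z.re + p))
      (by positivity : (0:ℝ) ≤ p ^ 2 + 4 * z.im ^ 2)]
end

section
/- Let s ∈ ℂ with s ≠ 1, and let α, β, h be strictly positive reals. Set θ = Re(2/(1 − s)) and ϑ = Im(2/(1 − s)). Then every complex root λ of the quadratic ψ(λ) = λ² + ((αh + β)(1 − s) − 2)·λ + 1 − β(1 − s) satisfies |λ| < 1 if and only if β²·(2(θ − β)/(αh) − 1) > ϑ². -/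
private lemma core_ineq (c x₁ y₁ x₂ y₂ : ℝ) (hc : 0 < c)
    (h1 : x₁*x₂ - y₁*y₂ = -(c*(x₁+x₂)))
    (h2 : x₁*y₂ + x₂*y₁ = -(c*(y₁+y₂))) :
    (x₁ < 0 ∧ x₂ < 0) ↔
      (x₁*x₂ - y₁*y₂) * ((x₁+x₂)^2 + (y₁+y₂)^2) > (x₁*y₂+x₂*y₁)^2 := by
  have key : (x₁*x₂ - y₁*y₂) * ((x₁+x₂)^2 + (y₁+y₂)^2) - (x₁*y₂+x₂*y₁)^2
      = x₁*x₂*((x₁+x₂)^2 + (y₁-y₂)^2) := by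
    linear_combination (y₁+y₂)^2 * h1 - (x₁+x₂)*(y₁+y₂) * h2
  rw [gt_iff_lt, ← sub_pos (b := (x₁*y₂+x₂*y₁)^2), key]
  constructor
  · rintro ⟨hx1, hx2⟩
    have hS2 : 0 < (x₁+x₂)^2 := by nlinarith
    exact mul_pos (mul_pos_of_neg_of_neg hx1 hx2) (by nlinarith [sq_nonneg (y₁-y₂)])
  · intro hcond
    have hcond0 : (x₁*y₂+x₂*y₁)^2 < (x₁*x₂ - y₁*y₂) * ((x₁+x₂)^2 + (y₁+y₂)^2) := by
      nlinarith [key]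
    have hS : x₁ + x₂ < 0 := by
      by_contra hS'
      push_neg at hS'
      have hq1 : x₁*x₂ - y₁*y₂ ≤ 0 := by nlinarith
      nlinarith [sq_nonneg (x₁*y₂+x₂*y₁), sq_nonneg (x₁+x₂), sq_nonneg (y₁+y₂),
        mul_nonneg (neg_nonneg.mpr hq1) (add_nonneg (sq_nonneg (x₁+x₂)) (sq_nonneg (y₁+y₂)))]
    have hP : 0 < x₁*x₂ := by nlinarith [sq_nonneg (y₁-y₂), sq_nonneg (x₁+x₂)]
    constructor <;> nlinarith

private lemma mobius_lt (l : ℂ) (hl : l + 1 ≠ 0) :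
    ‖l‖ < 1 ↔ ((l - 1) / (l + 1)).re < 0 := by
  have hn : 0 < Complex.normSq (l+1) := Complex.normSq_pos.mpr hl
  have habs : ‖l‖ < 1 ↔ Complex.normSq l < 1 := by
    rw [← Complex.sq_norm]
    constructor
    · intro h; nlinarith [norm_nonneg l]
    · intro h; nlinarith [norm_nonneg l]
  have hre : ((l - 1) / (l + 1)).re = (Complex.normSq l - 1) / Complex.normSq (l+1) := by
    rw [Complex.div_re]
    simp [Complex.normSq_apply]
    ring
  rw [habs, hre, div_neg_iff]
  constructor
  · intro h; exact Or.inr ⟨by linarith, hn⟩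
  · rintro (⟨_, h⟩ | ⟨h, _⟩)
    · linarith
    · linarith

private lemma final_arith (αh β θ ϑ : ℝ) (hαh : 0 < αh) (hβ : 0 < β) :
    (αh * (2*ϑ)^2 < 4*β^2*(2*θ - (αh+2*β)))
    ↔ ϑ^2 < β^2*(2*(θ-β)/αh - 1) := by
  have e : β^2*(2*(θ-β)/αh - 1) = (2*β^2*(θ-β) - β^2*αh)/αh := by
    field_simp; try ring
  rw [e, lt_div_iff₀ hαh]
  constructor <;> intro H <;> nlinarith

private lemma key_eq (ah β θ ϑ n : ℝ) (hn : n = (2*θ - (ah+2*β))^2 + (2*ϑ)^2) (hn0 : n ≠ 0) :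
    (ah * (2*θ - (ah+2*β)) / n) * ((-(2*β) * (2*θ - (ah+2*β)) / n)^2 + ((2*β) * (2*ϑ) / n)^2)
      - (-(ah * (2*ϑ) / n))^2
      = (4*β^2*(2*θ - (ah+2*β)) - ah*(2*ϑ)^2) * (ah/n^2) := by
  subst hn
  field_simp
  ring

private lemma final_iff (ah β θ ϑ n : ℝ) (hah : 0 < ah) (hβ : 0 < β)
    (hn : n = (2*θ - (ah+2*β))^2 + (2*ϑ)^2) (hn0 : 0 < n) :
    ((ah * (2*θ - (ah+2*β)) / n) * ((-(2*β) * (2*θ - (ah+2*β)) / n)^2 + ((2*β) * (2*ϑ) / n)^2)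
      > (-(ah * (2*ϑ) / n))^2)
    ↔ ϑ^2 < β^2*(2*(θ-β)/ah - 1) := by
  rw [gt_iff_lt, ← sub_pos (b := (-(ah * (2*ϑ) / n))^2), key_eq ah β θ ϑ n hn hn0.ne',
    ← final_arith ah β θ ϑ hah hβ]
  have hc : 0 < ah/n^2 := by positivity
  constructor
  · intro H
    by_contra Hc
    push_neg at Hc
    nlinarith [H, hc]
  · intro H
    have hX : 0 < 4*β^2*(2*θ - (ah+2*β)) - ah*(2*ϑ)^2 := by linarith
    exact mul_pos hX hc

/-- Key spectral step in Theorem 4 of the paper: for `s ≠ 1`, `α, β, h > 0`,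
with `θ = Re(2/(1−s))` and `ϑ = Im(2/(1−s))`, every root of
`ψ(λ) = λ² + ((αh + β)(1 − s) − 2)λ + 1 − β(1 − s)` lies in the open unit disc iff
`β²(2(θ − β)/(αh) − 1) > ϑ²`. -/
theorem stmt_6 (s : ℂ) (hs : s ≠ 1) (α β h : ℝ) (hα : 0 < α) (hβ : 0 < β) (hh : 0 < h)
    (θ ϑ : ℝ) (hθ : θ = (2 / (1 - s)).re) (hϑ : ϑ = (2 / (1 - s)).im) :
    (∀ l : ℂ, l ^ 2 + ((((α * h + β) : ℝ) : ℂ) * (1 - s) - 2) * l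
        + 1 - (β : ℂ) * (1 - s) = 0 → ‖l‖ < 1) ↔
      β ^ 2 * (2 * (θ - β) / (α * h) - 1) > ϑ ^ 2 := by
  have hαh : (0:ℝ) < α * h := mul_pos hα hh
  have hcast1 : (((α * h + β) : ℝ) : ℂ) = (α:ℂ)*(h:ℂ) + (β:ℂ) := by push_cast; ring
  simp only [hcast1]
  set w : ℂ := 1 - s with hw_def
  have hw : w ≠ 0 := sub_ne_zero.mpr (Ne.symm hs)
  set b : ℂ := ((α:ℂ)*(h:ℂ) + (β:ℂ)) * w - 2 with hb_def
  obtain ⟨d, hd⟩ := IsAlgClosed.exists_pow_nat_eq (k := ℂ) (b^2 - 4*(1 - (β:ℂ)*w)) two_pos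
  set l₁ : ℂ := (-b + d)/2 with hl1_def
  set l₂ : ℂ := (-b - d)/2 with hl2_def
  have hsum : l₁ + l₂ = -b := by rw [hl1_def, hl2_def]; ring
  have hprodc : l₁ * l₂ = 1 - (β:ℂ)*w := by
    rw [hl1_def, hl2_def]; linear_combination (-(1:ℂ)/4) * hd
  have hfac : ∀ l : ℂ, l^2 + b*l + 1 - (β:ℂ)*w = (l - l₁)*(l - l₂) := by
    intro l; linear_combination l * hsum - hprodc
  have hiff1 : (∀ l : ℂ, l ^ 2 + b * l + 1 - (β : ℂ) * w = 0 → ‖l‖ < 1)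
      ↔ (‖l₁‖ < 1 ∧ ‖l₂‖ < 1) := by
    constructor
    · intro H
      exact ⟨H l₁ (by rw [hfac]; ring), H l₂ (by rw [hfac]; ring)⟩
    · rintro ⟨H1, H2⟩ l hl
      rw [hfac] at hl
      rcases mul_eq_zero.mp hl with h' | h'
      · rw [sub_eq_zero.mp h']; exact H1
      · rw [sub_eq_zero.mp h']; exact H2
  rw [hiff1]
  by_cases hdeg : (l₁ + 1) * (l₂ + 1) = 0
  · -- degenerate case: -1 is a root; both sides false
    have hm1 := hfac (-1)
    have hA0 : ((α:ℂ)*(h:ℂ)+2*(β:ℂ)) * w = 4 := by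
      push_cast at hm1 ⊢
      linear_combination -hm1 - hdeg
    have hwval : (2:ℂ)/w = (((α*h+2*β)/2 : ℝ) : ℂ) := by
      have hz : ((α*h+2*β : ℝ):ℂ) ≠ 0 := by
        simp only [ne_eq, Complex.ofReal_eq_zero]; positivity
      rw [div_eq_iff hw]
      push_cast at hA0 ⊢
      linear_combination (-(1:ℂ)/2) * hA0
    have hθ' : θ = (α*h+2*β)/2 := by rw [hθ, hwval, Complex.ofReal_re]
    have hϑ' : ϑ = 0 := by rw [hϑ, hwval, Complex.ofReal_im]
    apply iff_of_false
    · rintro ⟨H1, H2⟩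
      rcases mul_eq_zero.mp hdeg with h' | h'
      · have hE : l₁ = -1 := by linear_combination h'
        rw [hE] at H1; simp at H1
      · have hE : l₂ = -1 := by linear_combination h'
        rw [hE] at H2; simp at H2
    · rw [hθ', hϑ']
      have hz : 2 * ((α*h+2*β)/2 - β) / (α * h) - 1 = 0 := by field_simp; ring
      rw [hz]
      simp
  · -- main case
    have h1 : l₁ + 1 ≠ 0 := fun hcon => hdeg (by rw [hcon, zero_mul])
    have h2 : l₂ + 1 ≠ 0 := fun hcon => hdeg (by rw [hcon, mul_zero])
    rw [mobius_lt l₁ h1, mobius_lt l₂ h2]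
    set z₁ : ℂ := (l₁ - 1)/(l₁ + 1) with hz1_def
    set z₂ : ℂ := (l₂ - 1)/(l₂ + 1) with hz2_def
    set A : ℂ := 4/w - ((α:ℂ)*(h:ℂ)+2*(β:ℂ)) with hA_def
    have hAw : w * A = (l₁+1)*(l₂+1) := by
      have h4 : w * (4/w) = 4 := by field_simp
      rw [hA_def]
      push_cast
      linear_combination h4 - hprodc - hsum
    have hAne : A ≠ 0 := by
      intro hcon
      exact hdeg (by rw [← hAw, hcon, mul_zero])
    -- product and sum of the z's
    have e1 : (z₁*z₂) * ((l₁+1)*(l₂+1)) = (l₁-1)*(l₂-1) := by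
      rw [hz1_def, hz2_def]; field_simp; try ring
    have hnum1 : (l₁-1)*(l₂-1) = ((α*h : ℝ):ℂ)*w := by
      push_cast
      linear_combination hprodc - hsum
    have hQA : (z₁*z₂) * A = ((α*h : ℝ):ℂ) := by
      apply mul_right_cancel₀ hw
      calc (z₁*z₂) * A * w = (z₁*z₂) * ((l₁+1)*(l₂+1)) := by rw [← hAw]; ring
        _ = ((α*h : ℝ):ℂ) * w := by rw [e1, hnum1]
    have hQ : z₁*z₂ = ((α*h : ℝ):ℂ)/A := (eq_div_iff hAne).mpr hQA
    have e2 : (z₁+z₂) * ((l₁+1)*(l₂+1)) = 2*(l₁*l₂) - 2 := by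
      rw [hz1_def, hz2_def]; field_simp; try ring
    have hnum2 : 2*(l₁*l₂) - 2 = (-(2*(β:ℝ)) : ℝ) * w := by
      push_cast
      linear_combination 2*hprodc
    have hZA : (z₁+z₂) * A = ((-(2*β) : ℝ):ℂ) := by
      apply mul_right_cancel₀ hw
      calc (z₁+z₂) * A * w = (z₁+z₂) * ((l₁+1)*(l₂+1)) := by rw [← hAw]; ring
        _ = ((-(2*β) : ℝ):ℂ) * w := by rw [e2, hnum2]
    have hZ : z₁+z₂ = ((-(2*β) : ℝ):ℂ)/A := (eq_div_iff hAne).mpr hZA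
    -- components
    set n : ℝ := Complex.normSq A with hn_def
    have hn0 : 0 < n := Complex.normSq_pos.mpr hAne
    have hAre : A.re = 2*θ - (α*h+2*β) := by
      have h42 : A = 2*((2:ℂ)/w) - ((α:ℂ)*(h:ℂ)+2*(β:ℂ)) := by rw [hA_def]; ring
      rw [hθ, h42]
      simp
      try ring
    have hAim : A.im = 2*ϑ := by
      have h42 : A = 2*((2:ℂ)/w) - ((α:ℂ)*(h:ℂ)+2*(β:ℂ)) := by rw [hA_def]; ring
      rw [hϑ, h42]
      simp
      try ring
    have hQre : (z₁*z₂).re = (α*h) * A.re / n := by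
      rw [hQ, Complex.div_re]
      simp [hn_def]
      try ring
    have hQim : (z₁*z₂).im = -((α*h) * A.im / n) := by
      rw [hQ, Complex.div_im]
      simp [hn_def]
      try ring
    have hZre : (z₁+z₂).re = -(2*β) * A.re / n := by
      rw [hZ, Complex.div_re]
      simp [hn_def]
      try ring
    have hZim : (z₁+z₂).im = (2*β) * A.im / n := by
      rw [hZ, Complex.div_im]
      simp [hn_def]
      try ring
    -- real constraints for core lemma
    have hc1 : z₁.re*z₂.re - z₁.im*z₂.im = -((α*h/(2*β))*(z₁.re+z₂.re)) := by
      have eA : (z₁*z₂).re = z₁.re*z₂.re - z₁.im*z₂.im := by rw [Complex.mul_re]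
      have eB : (z₁+z₂).re = z₁.re+z₂.re := by rw [Complex.add_re]
      rw [← eA, ← eB, hQre, hZre]
      field_simp
    have hc2 : z₁.re*z₂.im + z₂.re*z₁.im = -((α*h/(2*β))*(z₁.im+z₂.im)) := by
      have eA : (z₁*z₂).im = z₁.re*z₂.im + z₂.re*z₁.im := by rw [Complex.mul_im]; ring
      have eB : (z₁+z₂).im = z₁.im+z₂.im := by rw [Complex.add_im]
      rw [← eA, ← eB, hQim, hZim]
      field_simp
    rw [core_ineq (α*h/(2*β)) z₁.re z₁.im z₂.re z₂.im (by positivity) hc1 hc2]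
    -- rewrite the condition through the components
    have eA : z₁.re*z₂.re - z₁.im*z₂.im = (z₁*z₂).re := (Complex.mul_re z₁ z₂).symm
    have eB : z₁.re*z₂.im + z₂.re*z₁.im = (z₁*z₂).im := by rw [Complex.mul_im]; ring
    have eC : z₁.re+z₂.re = (z₁+z₂).re := (Complex.add_re z₁ z₂).symm
    have eD : z₁.im+z₂.im = (z₁+z₂).im := (Complex.add_im z₁ z₂).symm
    rw [eA, eB, eC, eD, hQre, hQim, hZre, hZim, hAre, hAim]
    have hnval : n = (2*θ - (α*h+2*β))^2 + (2*ϑ)^2 := by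
      rw [hn_def, Complex.normSq_apply, hAre, hAim]
      ring
    rw [final_iff (α*h) β θ ϑ n hαh hβ hnval hn0]
end

section
/- Let D be an n×n real matrix and let α, β, h be reals. Assume that every root s ∈ ℂ of the characteristic polynomial of D satisfies s ≠ 1, 0 < α < 2(1 − Re(s))/|1 − s|², and 0 < β < 2(1 − Re(s))/|1 − s|². Then every complex eigenvalue of the 2n×2n block matrix Λ₀ = [[(1−α)I_n + αD, h((1−β)I_n + βD)], [0, (1−β)I_n + βD]] has modulus strictly less than 1. -/
open Matrix Polynomial

lemma charpoly_eval_eq_det {m : ℕ} (M : Matrix (Fin m) (Fin m) ℂ) (x : ℂ) :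
    M.charpoly.eval x = (x • (1 : Matrix (Fin m) (Fin m) ℂ) - M).det := by
  rw [Matrix.charpoly, ← Polynomial.coe_evalRingHom, RingHom.map_det]
  congr 1
  ext i j
  by_cases h : i = j <;>
    simp [Matrix.charmatrix_apply, Matrix.one_apply, h, Matrix.diagonal_apply]

lemma aux_key {m : ℕ} (Dc : Matrix (Fin m) (Fin m) ℂ) (γ : ℝ)
    (hcond : ∀ s ∈ Dc.charpoly.roots, s ≠ 1 ∧ 0 < γ ∧
        γ < 2 * (1 - s.re) / ‖1 - s‖ ^ 2)
    (z : ℂ)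
    (hz : z ∈ ((1 - (γ : ℂ)) • (1 : Matrix (Fin m) (Fin m) ℂ) + (γ : ℂ) • Dc).charpoly.roots) :
    ‖z‖ < 1 := by
  set A := (1 - (γ : ℂ)) • (1 : Matrix (Fin m) (Fin m) ℂ) + (γ : ℂ) • Dc with hA
  have hApoly : A.charpoly ≠ 0 := A.charpoly_monic.ne_zero
  have hzroot : A.charpoly.eval z = 0 := by
    exact (Polynomial.mem_roots hApoly).mp hz
  -- m ≥ 1 since A.charpoly has a root
  have hm : 0 < m := by
    by_contra hm
    push_neg at hm
    interval_cases m
    · have : A.charpoly = 1 := by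
        have := A.charpoly_monic
        have hdeg : A.charpoly.natDegree = 0 := by
          simpa using A.charpoly_natDegree_eq_dim
        exact this.natDegree_eq_zero.mp hdeg
      rw [this] at hz
      simp at hz
  -- Dc.charpoly has a root, giving γ > 0
  have hDpoly : Dc.charpoly ≠ 0 := Dc.charpoly_monic.ne_zero
  obtain ⟨s₀, hs₀⟩ : ∃ s₀, Dc.charpoly.IsRoot s₀ := by
    apply Complex.exists_root
    rw [Polynomial.degree_eq_natDegree hDpoly]
    have : Dc.charpoly.natDegree = m := by simpa using Dc.charpoly_natDegree_eq_dim
    rw [this]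
    exact_mod_cast hm
  have hs₀mem : s₀ ∈ Dc.charpoly.roots := (Polynomial.mem_roots hDpoly).mpr hs₀
  have hγ : 0 < γ := (hcond s₀ hs₀mem).2.1
  have hγC : (γ : ℂ) ≠ 0 := by exact_mod_cast hγ.ne'
  -- s := (z - (1 - γ))/γ is a root of Dc.charpoly
  set s : ℂ := (z - (1 - (γ : ℂ))) / (γ : ℂ) with hs
  have hzs : z = (1 - (γ : ℂ)) + (γ : ℂ) * s := by
    rw [hs]; field_simp; ring
  have hsroot : s ∈ Dc.charpoly.roots := by
    refine (Polynomial.mem_roots hDpoly).mpr ?_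
    have hdet : (z • (1 : Matrix (Fin m) (Fin m) ℂ) - A) = (γ : ℂ) • (s • 1 - Dc) := by
      rw [hA, hzs]
      ext i j
      by_cases h : i = j <;> simp [Matrix.one_apply, h] <;> ring
    show Dc.charpoly.eval s = 0
    rw [charpoly_eval_eq_det] at hzroot ⊢
    rw [hdet, Matrix.det_smul] at hzroot
    have := mul_eq_zero.mp hzroot
    rcases this with h | h
    · exact absurd h (pow_ne_zero _ hγC)
    · exact h
  obtain ⟨hs1, -, hγlt⟩ := hcond s hsroot
  -- now the numeric estimate
  have habs : (0 : ℝ) < ‖1 - s‖ ^ 2 := by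
    have h0 : (1 : ℂ) - s ≠ 0 := sub_ne_zero.mpr (Ne.symm hs1)
    exact pow_pos (norm_pos_iff.mpr h0) 2
  have hkey : γ * (‖1 - s‖ ^ 2) < 2 * (1 - s.re) :=
    (lt_div_iff₀ habs).mp hγlt
  have hnormsq : ‖1 - s‖ ^ 2 = (1 - s.re) ^ 2 + s.im ^ 2 := by
    rw [Complex.sq_norm, Complex.normSq_apply]
    simp [Complex.sub_re, Complex.sub_im]
    ring
  rw [hnormsq] at hkey
  -- |z|² < 1
  have hzre : z.re = (1 - γ) + γ * s.re := by rw [hzs]; simp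
  have hzim : z.im = γ * s.im := by rw [hzs]; simp
  have hsq : ‖z‖ ^ 2 < 1 := by
    rw [Complex.sq_norm, Complex.normSq_apply, hzre, hzim]
    nlinarith [sq_nonneg s.im, sq_nonneg (1 - s.re), hγ]
  nlinarith [norm_nonneg z, hsq]

/-- Schur stability claim of Theorem 1: if every complex eigenvalue `s` of `D`
satisfies `s ≠ 1` and `0 < α, β < 2(1 − Re s)/|1 − s|²`, then every complex eigenvalue
of the first-order estimator matrix
`Λ₀ = [[(1−α)I + αD, h((1−β)I + βD)], [0, (1−β)I + βD]]` has modulus `< 1`. -/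
theorem stmt_9 (n : ℕ) (D : Matrix (Fin n) (Fin n) ℝ) (α β h : ℝ)
    (heig : ∀ s ∈ (D.map (fun x => (x : ℂ))).charpoly.roots,
      s ≠ 1 ∧ 0 < α ∧ α < 2 * (1 - s.re) / ‖1 - s‖ ^ 2 ∧
        0 < β ∧ β < 2 * (1 - s.re) / ‖1 - s‖ ^ 2)
    (Λ₀ : Matrix (Fin n ⊕ Fin n) (Fin n ⊕ Fin n) ℝ)
    (hΛ₀ : Λ₀ = Matrix.fromBlocks
      ((1 - α) • (1 : Matrix (Fin n) (Fin n) ℝ) + α • D)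
      (h • ((1 - β) • (1 : Matrix (Fin n) (Fin n) ℝ) + β • D))
      0
      ((1 - β) • (1 : Matrix (Fin n) (Fin n) ℝ) + β • D)) :
    ∀ z ∈ (Λ₀.map (fun x => (x : ℂ))).charpoly.roots, ‖z‖ < 1 := by
  intro z hz
  set Dc := D.map (fun x => (x : ℂ)) with hDc
  set A := (1 - (α : ℂ)) • (1 : Matrix (Fin n) (Fin n) ℂ) + (α : ℂ) • Dc with hA
  set B := (1 - (β : ℂ)) • (1 : Matrix (Fin n) (Fin n) ℂ) + (β : ℂ) • Dc with hB
  have hmap : Λ₀.map (fun x => (x : ℂ)) =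
      Matrix.fromBlocks A ((h : ℂ) • B) 0 B := by
    subst hΛ₀
    ext i j
    rcases i with i | i <;> rcases j with j | j <;>
      simp [Matrix.fromBlocks, hA, hB, hDc, Matrix.one_apply, Matrix.map_apply] <;>
      split <;> simp <;> ring
  rw [hmap, Matrix.charpoly_fromBlocks_zero₂₁] at hz
  have hApoly : A.charpoly ≠ 0 := A.charpoly_monic.ne_zero
  have hBpoly : B.charpoly ≠ 0 := B.charpoly_monic.ne_zero
  rw [Polynomial.roots_mul (mul_ne_zero hApoly hBpoly), Multiset.mem_add] at hz
  rcases hz with hz | hz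
  · exact aux_key Dc α (fun s hs => ⟨(heig s hs).1, (heig s hs).2.1, (heig s hs).2.2.1⟩) z hz
  · exact aux_key Dc β (fun s hs => ⟨(heig s hs).1, (heig s hs).2.2.2.1, (heig s hs).2.2.2.2⟩) z hz
end

section
/- Let D be an n×n complex matrix and let α, β, h ∈ ℂ, and define the 2n×2n block matrix Γ₀ = [[(1−αh)I_n + αhD, h((1−β)I_n + βD)], [α(D − I_n), (1−β)I_n + βD]]. Then the characteristic polynomial of Γ₀ equals the product, over the multiset of roots s ∈ ℂ of the characteristic polynomial of D (with multiplicity), of the quadratics X² + ((αh + β)(1 − s) − 2)·X + 1 − β(1 − s). -/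
open Polynomial Matrix

lemma aux_eval_det {n : ℕ} {K : Type*} [Field K] (N : Matrix (Fin n) (Fin n) K) (c : K) :
    (c • (1 : Matrix (Fin n) (Fin n) K) - N).det = N.charpoly.eval c := by
  rw [Matrix.charpoly, ← Polynomial.coe_evalRingHom, RingHom.map_det]
  congr 1
  ext i j
  by_cases hij : i = j <;>
    simp [hij, charmatrix_apply, Matrix.one_apply, Matrix.diagonal_apply]

lemma aux_det_lin {n : ℕ} {K : Type*} [Field K] (ψ : ℂ →+* K)
    (D : Matrix (Fin n) (Fin n) ℂ) (a b : K) :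
    (a • (1 : Matrix (Fin n) (Fin n) K) + b • D.map ψ).det
      = (D.charpoly.roots.map (fun s => a + ψ s * b)).prod := by
  have hsplits : D.charpoly.Splits := IsAlgClosed.splits _
  have hcard : Multiset.card D.charpoly.roots = n := by
    rw [Polynomial.splits_iff_card_roots.mp hsplits, Matrix.charpoly_natDegree_eq_dim,
      Fintype.card_fin]
  by_cases hb : b = 0
  · subst hb
    simp only [zero_smul, add_zero, mul_zero]
    rw [Matrix.det_smul, det_one, mul_one, Fintype.card_fin,
      Multiset.map_const', Multiset.prod_replicate, hcard]
  · set c : K := -(a * b⁻¹) with hc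
    have key : a • (1 : Matrix (Fin n) (Fin n) K) + b • D.map ψ
        = (-b) • (c • (1 : Matrix (Fin n) (Fin n) K) - D.map ψ) := by
      rw [smul_sub, smul_smul, hc]
      field_simp
      rw [neg_smul, sub_neg_eq_add]
    have heval : (D.charpoly.map ψ).eval c
        = (D.charpoly.roots.map fun s => c - ψ s).prod := by
      conv_lhs => rw [hsplits.eq_prod_roots_of_monic
        (Matrix.charpoly_monic D)]
      rw [Polynomial.map_multiset_prod, Multiset.map_map, Polynomial.eval_multiset_prod,
        Multiset.map_map]
      exact congrArg Multiset.prod (Multiset.map_congr rfl (fun s _ => by simp))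
    rw [key, Matrix.det_smul, Fintype.card_fin, aux_eval_det, Matrix.charpoly_map, heval]
    calc (-b) ^ n * (D.charpoly.roots.map fun s => c - ψ s).prod
        = (D.charpoly.roots.map fun _ => -b).prod
            * (D.charpoly.roots.map fun s => c - ψ s).prod := by
          rw [Multiset.map_const', Multiset.prod_replicate, hcard]
      _ = (D.charpoly.roots.map fun s => (-b) * (c - ψ s)).prod := by
          rw [Multiset.prod_map_mul]
      _ = (D.charpoly.roots.map fun s => a + ψ s * b).prod := by
          apply congrArg Multiset.prod
          apply Multiset.map_congr rfl
          intro s _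
          rw [hc]
          field_simp
          ring

set_option maxHeartbeats 2000000 in
/-- Factorization of the characteristic polynomial of the second-order estimator matrix
`Γ₀ = [[(1−αh)I + αhD, h((1−β)I + βD)], [α(D − I), (1−β)I + βD]]` as the product over the
eigenvalues `s` of `D` (with multiplicity) of `X² + ((αh + β)(1 − s) − 2)X + 1 − β(1 − s)`. -/
theorem stmt_10 (n : ℕ) (D : Matrix (Fin n) (Fin n) ℂ) (α β h : ℂ)
    (Γ₀ : Matrix (Fin n ⊕ Fin n) (Fin n ⊕ Fin n) ℂ)
    (hΓ₀ : Γ₀ = Matrix.fromBlocks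
      ((1 - α * h) • (1 : Matrix (Fin n) (Fin n) ℂ) + (α * h) • D)
      (h • ((1 - β) • (1 : Matrix (Fin n) (Fin n) ℂ) + β • D))
      (α • (D - 1))
      ((1 - β) • (1 : Matrix (Fin n) (Fin n) ℂ) + β • D)) :
    Γ₀.charpoly =
      (D.charpoly.roots.map (fun s =>
        X ^ 2 + C ((α * h + β) * (1 - s) - 2) * X + C (1 - β * (1 - s)))).prod := by
  subst hΓ₀
  set K := FractionRing (Polynomial ℂ) with hK
  set φ : ℂ[X] →+* K := algebraMap ℂ[X] K with hφ
  set ψ : ℂ →+* K := φ.comp (Polynomial.C : ℂ →+* ℂ[X]) with hψ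
  have hψc : ∀ c : ℂ, ψ c = φ (C c) := fun c => rfl
  set M : Matrix (Fin n) (Fin n) K := D.map ψ with hM
  set x : K := φ X with hx
  set a : ℂ[X] := X ^ 2 + C (α * h + β - 2) * X + C (1 - β) with ha
  set b : ℂ[X] := C β - C (α * h + β) * X with hb
  have hinj : Function.Injective φ := IsFractionRing.injective (Polynomial ℂ) K
  apply hinj
  -- rewrite RHS
  have hRHS : φ ((D.charpoly.roots.map (fun s =>
        X ^ 2 + C ((α * h + β) * (1 - s) - 2) * X + C (1 - β * (1 - s)))).prod)
      = (D.charpoly.roots.map (fun s => φ a + ψ s * φ b)).prod := by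
    rw [map_multiset_prod, Multiset.map_map]
    apply congrArg Multiset.prod
    apply Multiset.map_congr rfl
    intro s _
    have : X ^ 2 + C ((α * h + β) * (1 - s) - 2) * X + C (1 - β * (1 - s))
        = a + C s * b := by
      rw [ha, hb]
      simp only [_root_.map_sub, _root_.map_add, _root_.map_mul, _root_.map_one]
      ring
    rw [Function.comp_apply, this, _root_.map_add, _root_.map_mul, hψc]
  rw [hRHS]
  -- block computations
  have hone : ∀ c d : ℂ, ((c • (1 : Matrix (Fin n) (Fin n) ℂ) + d • D).map ψ)
      = ψ c • (1 : Matrix (Fin n) (Fin n) K) + ψ d • M := by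
    intro c d
    ext i j
    by_cases hij : i = j <;>
      simp [hij, Matrix.one_apply, Matrix.map_apply, Matrix.add_apply, Matrix.smul_apply, hM]
  have hcm : ∀ N : Matrix (Fin n) (Fin n) ℂ,
      (charmatrix N).map φ = x • (1 : Matrix (Fin n) (Fin n) K) - N.map ψ := by
    intro N
    ext i j
    by_cases hij : i = j <;>
      simp [hij, charmatrix_apply, Matrix.one_apply, Matrix.map_apply, Matrix.sub_apply,
        Matrix.smul_apply, Matrix.diagonal_apply, hψc, hx]
  have hoff : ∀ c d : ℂ, ((-(((c • (1 : Matrix (Fin n) (Fin n) ℂ) + d • D)).map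
        (Polynomial.C : ℂ → ℂ[X]))).map φ)
      = (-ψ c) • (1 : Matrix (Fin n) (Fin n) K) + (-ψ d) • M := by
    intro c d
    ext i j
    by_cases hij : i = j <;>
      simp [hij, Matrix.one_apply, Matrix.map_apply, Matrix.neg_apply, Matrix.add_apply,
        Matrix.smul_apply, hψc, hM] <;>
      ring
  set P : Matrix (Fin n) (Fin n) K := (x - ψ (1 - α * h)) • 1 + (-ψ (α * h)) • M with hP
  set Q : Matrix (Fin n) (Fin n) K := (-ψ (h * (1 - β))) • 1 + (-ψ (h * β)) • M with hQ
  set R : Matrix (Fin n) (Fin n) K := ψ α • 1 + (-ψ α) • M with hR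
  set S : Matrix (Fin n) (Fin n) K := (x - ψ (1 - β)) • 1 + (-ψ β) • M with hS
  have hSalt : S = (charmatrix ((1 - β) • (1 : Matrix (Fin n) (Fin n) ℂ) + β • D)).map φ := by
    rw [hcm, hone, hS, sub_smul, neg_smul]
    abel
  have h11 : (charmatrix ((1 - α * h) • (1 : Matrix (Fin n) (Fin n) ℂ) + (α * h) • D)).map φ
      = P := by
    rw [hcm, hone, hP, sub_smul, neg_smul]; abel
  have h12 : ((-((h • ((1 - β) • (1 : Matrix (Fin n) (Fin n) ℂ) + β • D)).map
      (Polynomial.C : ℂ → ℂ[X]))).map φ) = Q := by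
    have hB : h • ((1 - β) • (1 : Matrix (Fin n) (Fin n) ℂ) + β • D)
        = (h * (1 - β)) • (1 : Matrix (Fin n) (Fin n) ℂ) + (h * β) • D := by
      rw [smul_add, smul_smul, smul_smul]
    rw [hB, hoff, hQ]
  have h21 : ((-((α • (D - (1 : Matrix (Fin n) (Fin n) ℂ))).map
      (Polynomial.C : ℂ → ℂ[X]))).map φ) = R := by
    have hC : α • (D - (1 : Matrix (Fin n) (Fin n) ℂ))
        = (-α) • (1 : Matrix (Fin n) (Fin n) ℂ) + α • D := by
      rw [smul_sub, neg_smul]; abel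
    rw [hC, hoff, hR, map_neg, neg_neg]
  have hLHS : φ ((Matrix.fromBlocks
      ((1 - α * h) • (1 : Matrix (Fin n) (Fin n) ℂ) + (α * h) • D)
      (h • ((1 - β) • (1 : Matrix (Fin n) (Fin n) ℂ) + β • D))
      (α • (D - 1))
      ((1 - β) • (1 : Matrix (Fin n) (Fin n) ℂ) + β • D)).charpoly)
      = (Matrix.fromBlocks P Q R S).det := by
    rw [Matrix.charpoly, RingHom.map_det, RingHom.mapMatrix_apply, charmatrix_fromBlocks,
      Matrix.fromBlocks_map, h11, h12, h21, ← hSalt]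
  rw [hLHS]
  -- Schur complement
  have hSd : S.det ≠ 0 := by
    rw [hSalt, ← RingHom.mapMatrix_apply, ← RingHom.map_det, ← Matrix.charpoly]
    intro h0
    exact (Matrix.charpoly_monic _).ne_zero (hinj (by rw [h0, map_zero]))
  haveI : Invertible S := Matrix.invertibleOfIsUnitDet S (isUnit_iff_ne_zero.mpr hSd)
  rw [Matrix.det_fromBlocks₂₂]
  have hexpand : ∀ p q r t : K,
      ((p • (1 : Matrix (Fin n) (Fin n) K) + q • M) * (r • 1 + t • M))
        = (p * r) • (1 : Matrix (Fin n) (Fin n) K) + ((p * t) • M + (q * r) • M)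
            + (q * t) • (M * M) := by
    intro p q r t
    simp only [add_mul, mul_add, smul_mul_assoc, mul_smul_comm, Matrix.one_mul,
      Matrix.mul_one, smul_add, smul_smul]
    rw [mul_comm r p, mul_comm r q, mul_comm t p, mul_comm t q]
    abel
  have hRS : R * S = S * R := by
    rw [hR, hS, hexpand, hexpand, mul_comm (x - ψ (1 - β)) (ψ α),
      mul_comm (x - ψ (1 - β)) (-ψ α), mul_comm (-ψ β) (ψ α), mul_comm (-ψ β) (-ψ α),
      add_comm (((-ψ α) * (x - ψ (1 - β))) • M) ((ψ α * (-ψ β)) • M)]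
  have hmulS : (P - Q * ⅟S * R) * S = P * S - Q * R := by
    rw [sub_mul, Matrix.mul_assoc (Q * ⅟S), hRS, ← Matrix.mul_assoc,
      Matrix.mul_assoc Q, invOf_mul_self, Matrix.mul_one]
  have hφa : φ a = x ^ 2 + (ψ α * ψ h + ψ β - 2) * x + (1 - ψ β) := by
    rw [ha]
    simp only [_root_.map_add, _root_.map_mul, _root_.map_sub, _root_.map_one, map_pow,
      map_ofNat, hψc, hx]
  have hφb : φ b = ψ β - (ψ α * ψ h + ψ β) * x := by
    rw [hb]
    simp only [_root_.map_add, _root_.map_mul, _root_.map_sub, _root_.map_one, hψc, hx]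
  have e1 : (x - ψ (1 - α * h)) * (x - ψ (1 - β)) - (-ψ (h * (1 - β))) * (ψ α) = φ a := by
    rw [hφa]
    simp only [_root_.map_sub, _root_.map_mul, _root_.map_one]
    ring
  have e2 : ((x - ψ (1 - α * h)) * (-ψ β) + (-ψ (α * h)) * (x - ψ (1 - β)))
      - ((-ψ (h * (1 - β))) * (-ψ α) + (-ψ (h * β)) * (ψ α)) = φ b := by
    rw [hφb]
    simp only [_root_.map_sub, _root_.map_mul, _root_.map_one]
    ring
  have e3 : (-ψ (α * h)) * (-ψ β) = (-ψ (h * β)) * (-ψ α) := by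
    simp only [_root_.map_mul]
    ring
  have hmain : P * S - Q * R = φ a • 1 + φ b • M := by
    rw [hP, hQ, hR, hS, hexpand, hexpand, e3, ← e1, ← e2]
    rw [sub_smul, sub_smul, add_smul, add_smul]
    abel
  rw [mul_comm, ← Matrix.det_mul, hmulS, hmain, hM, aux_det_lin]
end

section
/- Let D be an n×n real matrix and let α, β, h be strictly positive reals. Assume that every root s ∈ ℂ of the characteristic polynomial of D satisfies s ≠ 1, β < θ(s), and h < 2β²(θ(s) − β)/(α(ϑ(s)² + β²)), where θ(s) = Re(2/(1 − s)) and ϑ(s) = Im(2/(1 − s)). Then every complex eigenvalue of the 2n×2n block matrix Γ₀ = [[(1−αh)I_n + αhD, h((1−β)I_n + βD)], [α(D − I_n), (1−β)I_n + βD]] has modulus strictly less than 1. -/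
open Matrix Polynomial

lemma det_fromBlocks_comm {m : Type*} [Fintype m] [DecidableEq m]
    (A B C D : Matrix m m ℂ) (hCD : C * D = D * C) :
    (Matrix.fromBlocks A B C D).det = (A * D - B * C).det := by
  let f : ℂ →+* ℂ[X] := Polynomial.C
  set A' := A.map f with hA'
  set B' := B.map f with hB'
  set C' := C.map f with hC'
  set Dt : Matrix m m ℂ[X] := D.map f + (X : ℂ[X]) • 1 with hDt
  have hcomm : C' * Dt = Dt * C' := by
    simp only [hDt, Matrix.mul_add, Matrix.add_mul, Matrix.mul_smul, Matrix.smul_mul,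
      Matrix.mul_one, Matrix.one_mul, hC']
    rw [← Matrix.map_mul, ← Matrix.map_mul, hCD]
  have hprod : (fromBlocks A' B' C' Dt) * (fromBlocks Dt 0 (-C') 1)
      = fromBlocks (A' * Dt - B' * C') B' 0 Dt := by
    simp [Matrix.fromBlocks_multiply, Matrix.mul_neg, hcomm, sub_eq_add_neg]
  have hDtdet : Dt.det ≠ 0 := by
    have hDm : Dt = charmatrix (-D) := by
      ext i j
      by_cases hij : i = j <;>
        simp [hDt, charmatrix_apply, hij, Matrix.one_apply, Matrix.diagonal, f, add_comm]
    rw [hDm]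
    exact ((Matrix.charpoly_monic (-D)).ne_zero)
  have h1 : (fromBlocks A' B' C' Dt).det * Dt.det = (A' * Dt - B' * C').det * Dt.det := by
    have h2 := congrArg Matrix.det hprod
    rwa [Matrix.det_mul, Matrix.det_fromBlocks_zero₁₂, Matrix.det_fromBlocks_zero₂₁,
      Matrix.det_one, mul_one] at h2
  have h2 : (fromBlocks A' B' C' Dt).det = (A' * Dt - B' * C').det :=
    mul_right_cancel₀ hDtdet h1
  have h3 := congrArg (Polynomial.evalRingHom (0 : ℂ)) h2
  rw [RingHom.map_det, RingHom.map_det] at h3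
  have e1 : ∀ M : Matrix m m ℂ, (M.map f).map (Polynomial.evalRingHom (0:ℂ)) = M := by
    intro M; ext i j; simp [f]
  have e2 : Dt.map (Polynomial.evalRingHom (0:ℂ)) = D := by
    ext i j
    by_cases hij : i = j <;> simp [hDt, Matrix.one_apply, hij, f]
  have e3 : ((fromBlocks A' B' C' Dt).map (Polynomial.evalRingHom (0:ℂ)))
      = fromBlocks A B C D := by
    rw [Matrix.fromBlocks_map, e1, e1, e1, e2]
  have e4 : ((A' * Dt - B' * C').map (Polynomial.evalRingHom (0:ℂ))) = A * D - B * C := by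
    show (Polynomial.evalRingHom (0:ℂ)).mapMatrix (A' * Dt - B' * C') = _
    rw [map_sub, _root_.map_mul, _root_.map_mul]
    simp only [RingHom.mapMatrix_apply, e1, e2, hA', hB', hC']
  rw [RingHom.mapMatrix_apply, RingHom.mapMatrix_apply, e3, e4] at h3
  exact h3

lemma eval_charpoly' {m : Type*} [Fintype m] [DecidableEq m] {R : Type*} [CommRing R]
    (M : Matrix m m R) (t : R) :
    (M.charpoly).eval t = (t • (1 : Matrix m m R) - M).det := by
  rw [Matrix.charpoly, ← Polynomial.coe_evalRingHom, RingHom.map_det]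
  congr 1
  ext i j
  by_cases hij : i = j <;>
    simp [Matrix.charmatrix_apply, hij, Matrix.one_apply, Matrix.diagonal]

lemma hurwitz2 (a A B : ℝ) (w : ℂ) (ha : 0 < a) (hAB : B ^ 2 < A * a ^ 2)
    (hw : w ^ 2 + (a : ℂ) * w + ((A : ℂ) + (B : ℂ) * Complex.I) = 0) : w.re < 0 := by
  set x := w.re
  set y := w.im
  have hre : x ^ 2 - y ^ 2 + a * x + A = 0 := by
    have := congrArg Complex.re hw
    simp only [Complex.add_re, Complex.mul_re, Complex.ofReal_re, Complex.ofReal_im,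
      Complex.I_re, Complex.I_im, Complex.zero_re, pow_two, Complex.mul_im] at this
    nlinarith [this]
  have him : 2 * x * y + a * y + B = 0 := by
    have := congrArg Complex.im hw
    simp only [Complex.add_im, Complex.mul_im, Complex.mul_re, Complex.ofReal_re,
      Complex.ofReal_im, Complex.I_re, Complex.I_im, Complex.zero_im, pow_two] at this
    nlinarith [this]
  have hA : 0 < A := by nlinarith [sq_nonneg B, sq_nonneg a]
  by_contra hx
  push_neg at hx
  have hy2 : y ^ 2 = x ^ 2 + a * x + A := by nlinarith [hre]
  have hB : B = -(2 * x + a) * y := by nlinarith [him]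
  have hB2 : B ^ 2 = (2 * x + a) ^ 2 * (x ^ 2 + a * x + A) := by
    rw [hB]; ring_nf; nlinarith [hy2]
  nlinarith [mul_nonneg hx hx, mul_nonneg hx ha.le, sq_nonneg (2 * x + a),
    mul_nonneg (mul_nonneg hx hx) hA.le, mul_nonneg (mul_nonneg hx ha.le) hA.le,
    mul_nonneg hx (mul_nonneg hx (mul_nonneg hx hx))]

lemma scalar_main (α β h : ℝ) (hα : 0 < α) (hβ : 0 < β) (hh : 0 < h)
    (s z : ℂ) (hs1 : s ≠ 1) (hθ : β < (2 / (1 - s)).re)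
    (hcond : h < 2 * β ^ 2 * ((2 / (1 - s)).re - β) / (α * ((2 / (1 - s)).im ^ 2 + β ^ 2)))
    (hquad : z ^ 2 - ((2 : ℂ) - α * h - β) * z + (1 - β) + s * (β - ((α : ℂ) * h + β) * z) = 0) :
    ‖z‖ < 1 := by
  set θ : ℝ := (2 / (1 - s)).re with hθdef
  set ϑ : ℝ := (2 / (1 - s)).im with hϑdef
  have hu : (1 : ℂ) - s ≠ 0 := sub_ne_zero.mpr (Ne.symm hs1)
  have hT : ((1 : ℂ) - s) * ((θ : ℂ) + (ϑ : ℂ) * Complex.I) = 2 := by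
    have h1 : (θ : ℂ) + (ϑ : ℂ) * Complex.I = 2 / (1 - s) := Complex.re_add_im _
    rw [h1, mul_div_cancel₀ _ hu]
  have hθpos : 0 < θ := lt_trans hβ hθ
  have hz1 : z ≠ 1 := by
    intro hz
    subst hz
    have : (α * h : ℂ) * (1 - s) = 0 := by linear_combination hquad
    rcases mul_eq_zero.mp this with h' | h'
    · have : α * h = 0 := by exact_mod_cast h'
      nlinarith
    · exact hu h'
  have hzm : z - 1 ≠ 0 := sub_ne_zero.mpr hz1
  set w : ℂ := (z + 1) / (z - 1) with hwdef
  have hw : w * (z - 1) = z + 1 := div_mul_cancel₀ _ hzm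
  have key : ((1 : ℂ) - s) * (z - 1) ^ 2 *
      ((α * h : ℂ) * w ^ 2 + 2 * β * w + ((2 * θ - α * h - 2 * β : ℝ) + (2 * ϑ : ℝ) * Complex.I)) = 0 := by
    have expand : ((1 : ℂ) - s) * (z - 1) ^ 2 *
        ((α * h : ℂ) * w ^ 2 + 2 * β * w + ((2 * θ - α * h - 2 * β : ℝ) + (2 * ϑ : ℝ) * Complex.I))
        = ((1 : ℂ) - s) * ((α * h : ℂ) * (w * (z - 1)) ^ 2 + 2 * β * (w * (z - 1)) * (z - 1)
            + (((2 * θ : ℝ) : ℂ) + (2 * ϑ : ℝ) * Complex.I - α * h - 2 * β) * (z - 1) ^ 2) := by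
      push_cast
      ring
    rw [expand, hw]
    push_cast
    linear_combination (4 : ℂ) * hquad + 2 * (z - 1) ^ 2 * hT
  have hwquad : (α * h : ℂ) * w ^ 2 + 2 * β * w
      + ((2 * θ - α * h - 2 * β : ℝ) + (2 * ϑ : ℝ) * Complex.I) = 0 := by
    have h2 := mul_eq_zero.mp key
    rcases h2 with h2 | h2
    · rcases mul_eq_zero.mp h2 with h3 | h3
      · exact absurd h3 hu
      · exact absurd h3 (pow_ne_zero 2 hzm)
    · exact h2
  have hαh : (0 : ℝ) < α * h := mul_pos hα hh
  have hαhC : (α * h : ℂ) ≠ 0 := by exact_mod_cast ne_of_gt hαh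
  have hwquad' : w ^ 2 + ((2 * β / (α * h) : ℝ) : ℂ) * w
      + ((((2 * θ - α * h - 2 * β) / (α * h) : ℝ) : ℂ)
        + ((2 * ϑ / (α * h) : ℝ) : ℂ) * Complex.I) = 0 := by
    have heq : (α * h : ℂ) * (w ^ 2 + ((2 * β / (α * h) : ℝ) : ℂ) * w
        + ((((2 * θ - α * h - 2 * β) / (α * h) : ℝ) : ℂ)
          + ((2 * ϑ / (α * h) : ℝ) : ℂ) * Complex.I)) =
        (α * h : ℂ) * w ^ 2 + 2 * β * w
          + ((2 * θ - α * h - 2 * β : ℝ) + (2 * ϑ : ℝ) * Complex.I) := by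
      push_cast
      have hα0 : (α : ℂ) ≠ 0 := by exact_mod_cast hα.ne'
      have hh0 : (h : ℂ) ≠ 0 := by exact_mod_cast hh.ne'
      field_simp
    have h4 := heq.trans hwquad
    rcases mul_eq_zero.mp h4 with h5 | h5
    · exact absurd h5 hαhC
    · exact h5
  have hdenpos : 0 < α * (ϑ ^ 2 + β ^ 2) := by positivity
  have hcond' : h * (α * (ϑ ^ 2 + β ^ 2)) < 2 * β ^ 2 * (θ - β) :=
    (lt_div_iff₀ hdenpos).mp hcond
  have hAB : (2 * ϑ / (α * h)) ^ 2
      < ((2 * θ - α * h - 2 * β) / (α * h)) * (2 * β / (α * h)) ^ 2 := by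
    rw [div_pow, div_pow, div_mul_div_comm, div_lt_div_iff₀ (by positivity) (by positivity)]
    ring_nf
    nlinarith [hcond', sq_nonneg ϑ, hαh, mul_pos hαh hαh]
  have hwre : w.re < 0 :=
    hurwitz2 _ _ _ w (by positivity) hAB hwquad'
  have hwre' : w.re = (Complex.normSq z - 1) / Complex.normSq (z - 1) := by
    rw [hwdef, Complex.div_re]
    simp only [Complex.add_re, Complex.add_im, Complex.sub_re, Complex.sub_im,
      Complex.one_re, Complex.one_im, Complex.normSq_apply]
    ring
  have hnz : 0 < Complex.normSq (z - 1) := Complex.normSq_pos.mpr hzm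
  have hlt : Complex.normSq z < 1 := by
    by_contra hge
    push_neg at hge
    have : 0 ≤ w.re := by
      rw [hwre']
      exact div_nonneg (by linarith) hnz.le
    linarith
  have habs : ‖z‖ ^ 2 < 1 := by
    rw [Complex.sq_norm]; exact hlt
  nlinarith [norm_nonneg z, habs]

/-- Schur stability claim of Theorem 4: if every complex eigenvalue `s` of `D` satisfies
`s ≠ 1`, `β < θ(s)` and `h < 2β²(θ(s) − β)/(α(ϑ(s)² + β²))`, where `θ(s) = Re(2/(1−s))`
and `ϑ(s) = Im(2/(1−s))`, then every complex eigenvalue of the second-order estimator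
matrix `Γ₀ = [[(1−αh)I + αhD, h((1−β)I + βD)], [α(D − I), (1−β)I + βD]]` has
modulus `< 1`. -/
theorem stmt_11 (n : ℕ) (D : Matrix (Fin n) (Fin n) ℝ) (α β h : ℝ)
    (hα : 0 < α) (hβ : 0 < β) (hh : 0 < h)
    (heig : ∀ s ∈ (D.map (fun x => (x : ℂ))).charpoly.roots,
      s ≠ 1 ∧ β < (2 / (1 - s)).re ∧
        h < 2 * β ^ 2 * ((2 / (1 - s)).re - β) / (α * ((2 / (1 - s)).im ^ 2 + β ^ 2)))
    (Γ₀ : Matrix (Fin n ⊕ Fin n) (Fin n ⊕ Fin n) ℝ)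
    (hΓ₀ : Γ₀ = Matrix.fromBlocks
      ((1 - α * h) • (1 : Matrix (Fin n) (Fin n) ℝ) + (α * h) • D)
      (h • ((1 - β) • (1 : Matrix (Fin n) (Fin n) ℝ) + β • D))
      (α • (D - 1))
      ((1 - β) • (1 : Matrix (Fin n) (Fin n) ℝ) + β • D)) :
    ∀ z ∈ (Γ₀.map (fun x => (x : ℂ))).charpoly.roots, ‖z‖ < 1 := by
  set D' : Matrix (Fin n) (Fin n) ℂ := D.map (fun x => (x : ℂ)) with hD'
  set A2 : Matrix (Fin n) (Fin n) ℂ :=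
    ((1 - α * h : ℝ) : ℂ) • 1 + ((α * h : ℝ) : ℂ) • D' with hA2
  set B2 : Matrix (Fin n) (Fin n) ℂ :=
    ((h * (1 - β) : ℝ) : ℂ) • 1 + ((h * β : ℝ) : ℂ) • D' with hB2
  set C2 : Matrix (Fin n) (Fin n) ℂ :=
    ((α : ℝ) : ℂ) • D' - ((α : ℝ) : ℂ) • 1 with hC2
  set D2 : Matrix (Fin n) (Fin n) ℂ :=
    ((1 - β : ℝ) : ℂ) • 1 + ((β : ℝ) : ℂ) • D' with hD2
  have e11 : (((1 - α * h) • (1 : Matrix (Fin n) (Fin n) ℝ) + (α * h) • D).map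
      (fun x => (x : ℂ))) = A2 := by
    ext i j
    by_cases hij : i = j <;>
      simp [hA2, hD', Matrix.one_apply, hij] <;> push_cast <;> ring
  have e12 : ((h • ((1 - β) • (1 : Matrix (Fin n) (Fin n) ℝ) + β • D)).map
      (fun x => (x : ℂ))) = B2 := by
    ext i j
    by_cases hij : i = j <;>
      simp [hB2, hD', Matrix.one_apply, hij] <;> push_cast <;> ring
  have e21 : ((α • (D - 1)).map (fun x => (x : ℂ))) = C2 := by
    ext i j
    by_cases hij : i = j <;>
      simp [hC2, hD', Matrix.one_apply, hij] <;> push_cast <;> ring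
  have e22 : (((1 - β) • (1 : Matrix (Fin n) (Fin n) ℝ) + β • D).map
      (fun x => (x : ℂ))) = D2 := by
    ext i j
    by_cases hij : i = j <;>
      simp [hD2, hD', Matrix.one_apply, hij] <;> push_cast <;> ring
  have hmap : Γ₀.map (fun x => (x : ℂ)) = fromBlocks A2 B2 C2 D2 := by
    rw [hΓ₀, Matrix.fromBlocks_map, e11, e12, e21, e22]
  intro z hz
  rw [Polynomial.mem_roots'] at hz
  obtain ⟨-, hroot⟩ := hz
  have hdet0 : (z • (1 : Matrix (Fin n ⊕ Fin n) (Fin n ⊕ Fin n) ℂ)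
      - Γ₀.map (fun x => (x : ℂ))).det = 0 := by
    rw [← eval_charpoly']
    exact hroot
  have hblocks : z • (1 : Matrix (Fin n ⊕ Fin n) (Fin n ⊕ Fin n) ℂ)
      - Γ₀.map (fun x => (x : ℂ))
      = fromBlocks (z • 1 - A2) (-B2) (-C2) (z • 1 - D2) := by
    rw [hmap, ← Matrix.fromBlocks_one, Matrix.fromBlocks_smul]
    ext i j
    cases i <;> cases j <;> simp [Matrix.sub_apply]
  have hcomm : (-C2) * (z • 1 - D2) = (z • 1 - D2) * (-C2) := by
    simp only [hC2, hD2, Matrix.mul_sub, Matrix.sub_mul, Matrix.mul_add, Matrix.add_mul,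
      Matrix.neg_mul, Matrix.mul_neg, Matrix.smul_mul, Matrix.mul_smul, Matrix.mul_one,
      Matrix.one_mul, neg_sub, sub_mul, mul_sub]
    module
  set q : ℂ := z ^ 2 - ((2 : ℂ) - α * h - β) * z + (1 - β) with hq
  set r : ℂ := (β : ℂ) - ((α : ℂ) * h + β) * z with hr
  have hMeq : (z • 1 - A2) * (z • 1 - D2) - (-B2) * (-C2)
      = q • (1 : Matrix (Fin n) (Fin n) ℂ) + r • D' := by
    simp only [hq, hr, hA2, hB2, hC2, hD2, Matrix.mul_sub, Matrix.sub_mul, Matrix.mul_add,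
      Matrix.add_mul, Matrix.neg_mul, Matrix.mul_neg, Matrix.smul_mul, Matrix.mul_smul,
      Matrix.mul_one, Matrix.one_mul, neg_sub, sub_mul, mul_sub]
    push_cast
    module
  have hdetM : (q • (1 : Matrix (Fin n) (Fin n) ℂ) + r • D').det = 0 := by
    rw [← hMeq, ← det_fromBlocks_comm _ _ _ _ hcomm, ← hblocks]
    exact hdet0
  by_cases hr0 : r = 0
  -- case r = 0 : z = β / (α h + β)
  · have hzval : z = ((β / (α * h + β) : ℝ) : ℂ) := by
      have hne : ((α : ℂ) * h + β) ≠ 0 := by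
        have : ((α * h + β : ℝ) : ℂ) ≠ 0 := by
          exact_mod_cast (by positivity : (0:ℝ) < α * h + β).ne'
        push_cast at this ⊢
        convert this using 2 <;> push_cast <;> ring
      rw [hr] at hr0
      have hβz : (β : ℂ) = ((α : ℂ) * h + β) * z := by linear_combination hr0
      push_cast
      field_simp
      linear_combination -hβz
    rw [hzval, Complex.norm_real, Real.norm_eq_abs, abs_of_pos (by positivity)]
    rw [div_lt_one (by positivity)]
    nlinarith [mul_pos hα hh]
  -- case r ≠ 0
  · set w : ℂ := -q / r with hw
    have hfact : q • (1 : Matrix (Fin n) (Fin n) ℂ) + r • D'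
        = (-r) • (w • (1 : Matrix (Fin n) (Fin n) ℂ) - D') := by
      rw [hw, smul_sub, smul_smul]
      have : -r * (-q / r) = q := by field_simp
      rw [this, neg_smul, sub_neg_eq_add]
    have hdet2 : (w • (1 : Matrix (Fin n) (Fin n) ℂ) - D').det = 0 := by
      have := hdetM
      rw [hfact, Matrix.det_smul] at this
      have hrn : (-r) ^ Fintype.card (Fin n) ≠ 0 := pow_ne_zero _ (neg_ne_zero.mpr hr0)
      exact (mul_eq_zero.mp this).resolve_left hrn
    have hwroot : w ∈ (D.map (fun x => (x : ℂ))).charpoly.roots := by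
      rw [Polynomial.mem_roots']
      refine ⟨(Matrix.charpoly_monic _).ne_zero, ?_⟩
      show Polynomial.eval w _ = 0
      rw [eval_charpoly']
      rw [← hD']
      exact hdet2
    obtain ⟨hw1, hwθ, hwcond⟩ := heig w hwroot
    apply scalar_main α β h hα hβ hh w z hw1 hwθ hwcond
    have hwr : w * r = -q := by rw [hw]; field_simp
    rw [hq, hr] at hwr
    linear_combination hwr
end

section
/- Let m ≥ 1, let M be an m×m real symmetric positive semidefinite matrix with vᵀMv ≤ λ_M·‖v‖₂² for all v ∈ ℝᵐ (for some λ_M ≥ 0), and let K be an m×m real symmetric matrix with eᵀKe ≥ λ_K·‖e‖₂² for all e ∈ ℝᵐ (for some λ_K ∈ ℝ). Then for all e, v ∈ ℝᵐ: (1/4)·vᵀMv + vᵀM·tanh(e) + (1/2)·eᵀKe ≥ (1/2)·(λ_K − 2λ_M)·‖e‖₂², where tanh(e) denotes the vector obtained by applying the hyperbolic tangent componentwise. -/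
open Matrix

lemma tanh_le_self_aux {x : ℝ} (hx : 0 ≤ x) : Real.tanh x ≤ x := by
  have hmono : MonotoneOn (fun x : ℝ => x * Real.cosh x - Real.sinh x) (Set.Ici 0) := by
    apply monotoneOn_of_deriv_nonneg (convex_Ici 0)
    · exact ((continuous_id.mul Real.continuous_cosh).sub Real.continuous_sinh).continuousOn
    · intro y _
      exact ((differentiableAt_id.mul Real.differentiable_cosh.differentiableAt).sub
        Real.differentiable_sinh.differentiableAt).differentiableWithinAt
    · intro y hy
      rw [interior_Ici, Set.mem_Ioi] at hy
      have hd : HasDerivAt (fun x : ℝ => x * Real.cosh x - Real.sinh x)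
          ((1 * Real.cosh y + y * Real.sinh y) - Real.cosh y) y :=
        ((hasDerivAt_id y).mul (Real.hasDerivAt_cosh y)).sub (Real.hasDerivAt_sinh y)
      rw [hd.deriv]
      have := Real.sinh_nonneg_iff.2 hy.le
      nlinarith
  have h := hmono (Set.self_mem_Ici) (Set.mem_Ici.2 hx) hx
  simp only [Real.sinh_zero, Real.cosh_zero, zero_mul, sub_zero, zero_sub, neg_nonpos] at h
  have hs : Real.sinh x ≤ x * Real.cosh x := by simpa using h
  rw [Real.tanh_eq_sinh_div_cosh, div_le_iff₀ (Real.cosh_pos x)]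
  linarith

lemma tanh_sq_le_sq (x : ℝ) : Real.tanh x ^ 2 ≤ x ^ 2 := by
  rcases le_total 0 x with hx | hx
  · have h1 := tanh_le_self_aux hx
    have h2 : 0 ≤ Real.tanh x := by
      rw [Real.tanh_eq_sinh_div_cosh]
      exact div_nonneg (Real.sinh_nonneg_iff.2 hx) (Real.cosh_pos x).le
    nlinarith
  · have h1 := tanh_le_self_aux (neg_nonneg.2 hx)
    rw [Real.tanh_neg] at h1
    have h2 : Real.tanh x ≤ 0 := by
      rw [Real.tanh_eq_sinh_div_cosh]
      exact div_nonpos_of_nonpos_of_nonneg (Real.sinh_nonpos_iff.2 hx) (Real.cosh_pos x).le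
    nlinarith

/-- Positive-definiteness bound for the Lyapunov function candidate (4.0): for a symmetric
positive-semidefinite `M` with `vᵀMv ≤ λ_M ‖v‖₂²` and a symmetric `K` with
`eᵀKe ≥ λ_K ‖e‖₂²`, one has
`(1/4) vᵀMv + vᵀM tanh(e) + (1/2) eᵀKe ≥ (1/2)(λ_K − 2λ_M) ‖e‖₂²`,
where `tanh` is applied componentwise. -/
theorem stmt_15 (m : ℕ) (hm : 1 ≤ m) (M K : Matrix (Fin m) (Fin m) ℝ)
    (lM lK : ℝ) (hlM : 0 ≤ lM)
    (hMsymm : M.IsSymm) (hMpsd : ∀ v : Fin m → ℝ, 0 ≤ v ⬝ᵥ M.mulVec v)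
    (hMub : ∀ v : Fin m → ℝ, v ⬝ᵥ M.mulVec v ≤ lM * ∑ i, v i ^ 2)
    (hKsymm : K.IsSymm)
    (hKlb : ∀ e : Fin m → ℝ, lK * ∑ i, e i ^ 2 ≤ e ⬝ᵥ K.mulVec e) :
    ∀ e v : Fin m → ℝ,
      (1 / 4) * (v ⬝ᵥ M.mulVec v) + v ⬝ᵥ M.mulVec (fun i => Real.tanh (e i))
          + (1 / 2) * (e ⬝ᵥ K.mulVec e)
        ≥ (1 / 2) * (lK - 2 * lM) * ∑ i, e i ^ 2 := by
  intro e v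
  set t : Fin m → ℝ := fun i => Real.tanh (e i) with ht
  have hsymm : ∀ x y : Fin m → ℝ, x ⬝ᵥ M.mulVec y = y ⬝ᵥ M.mulVec x := by
    intro x y
    rw [Matrix.dotProduct_mulVec, ← Matrix.mulVec_transpose, hMsymm.eq, dotProduct_comm]
  -- expand (v + 2t)ᵀ M (v + 2t)
  have hexp : (v + (2:ℝ) • t) ⬝ᵥ M.mulVec (v + (2:ℝ) • t)
      = v ⬝ᵥ M.mulVec v + 4 * (v ⬝ᵥ M.mulVec t) + 4 * (t ⬝ᵥ M.mulVec t) := by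
    simp only [Matrix.mulVec_add, Matrix.mulVec_smul, dotProduct_add, add_dotProduct,
      smul_dotProduct, dotProduct_smul, smul_eq_mul]
    rw [hsymm t v]
    ring
  have hpsd := hMpsd (v + (2:ℝ) • t)
  rw [hexp] at hpsd
  have htM : t ⬝ᵥ M.mulVec t ≤ lM * ∑ i, e i ^ 2 := by
    refine (hMub t).trans ?_
    have : ∑ i, t i ^ 2 ≤ ∑ i, e i ^ 2 :=
      Finset.sum_le_sum fun i _ => tanh_sq_le_sq (e i)
    nlinarith
  have hK := hKlb e
  linarith
end

section
/- Let n, m ≥ 1, let D be an n×n real matrix, and let β, h ∈ ℝ with h > 0 be such that every root s ∈ ℂ of the characteristic polynomial of D satisfies s ≠ 1 and 0 < β < 2(1 − Re(s))/|1 − s|². Let γ₂ ≥ 0 and let υ₀, a₀ : ℝ → ℝᵐ satisfy: υ₀ is differentiable with derivative a₀ and ‖a₀(t)‖_∞ ≤ γ₂ for all t. Fix t₀ ∈ ℝ and set t_k = t₀ + kh. Then there exists a constant C > 0, depending only on n, D, and β, such that for every sequence ῡ : ℕ → (ℝᵐ)ⁿ satisfying, for all k ≥ 1 and all i ∈ {1,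 …, n}, ῡ_i(k+1) = Σ_j [(1−β)I + βD]_{ij} ῡ_j(k) + υ₀(t_k) − υ₀(t_{k+1}), one has limsup_{k→∞} max_i ‖ῡ_i(k)‖_∞ ≤ C·h·γ₂. -/
open Matrix Polynomial
open scoped ENNReal NNReal
attribute [local instance] Matrix.linftyOpNormedRing Matrix.linftyOpNormedAlgebra

section aux

section act
variable {n m : ℕ}

def mact (A : Matrix (Fin n) (Fin n) ℝ) (v : Fin n → Fin m → ℝ) : Fin n → Fin m → ℝ :=
  fun i => ∑ j, A i j • v j

lemma mact_one (v : Fin n → Fin m → ℝ) : mact (1 : Matrix (Fin n) (Fin n) ℝ) v = v := by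
  funext i
  simp [mact, Matrix.one_apply]

lemma mact_mul (A B : Matrix (Fin n) (Fin n) ℝ) (v : Fin n → Fin m → ℝ) :
    mact (A * B) v = mact A (mact B v) := by
  funext i
  simp only [mact, Matrix.mul_apply, Finset.sum_smul, Finset.smul_sum, mul_smul]
  exact Finset.sum_comm

lemma mact_add (A : Matrix (Fin n) (Fin n) ℝ) (v w : Fin n → Fin m → ℝ) :
    mact A (v + w) = mact A v + mact A w := by
  funext i
  simp [mact, smul_add, Finset.sum_add_distrib]

lemma norm_mact_le (A : Matrix (Fin n) (Fin n) ℝ) (v : Fin n → Fin m → ℝ) :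
    ‖mact A v‖ ≤ ‖A‖ * ‖v‖ := by
  refine (pi_norm_le_iff_of_nonneg (by positivity)).mpr fun i => ?_
  have hrow : (∑ j, |A i j|) ≤ ‖A‖ := by
    have h1 : (∑ j, ‖A i j‖₊) ≤ ‖A‖₊ := by
      rw [Matrix.linfty_opNNNorm_def]
      exact Finset.le_sup (f := fun i => ∑ j, ‖A i j‖₊) (Finset.mem_univ i)
    calc (∑ j, |A i j|) = ((∑ j, ‖A i j‖₊ : ℝ≥0) : ℝ) := by
          push_cast
          simp [Real.norm_eq_abs]
      _ ≤ ((‖A‖₊ : ℝ≥0) : ℝ) := by exact_mod_cast h1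
      _ = ‖A‖ := rfl
  calc ‖∑ j, A i j • v j‖ ≤ ∑ j, ‖A i j • v j‖ := norm_sum_le _ _
    _ = ∑ j, |A i j| * ‖v j‖ := by simp [norm_smul, Real.norm_eq_abs]
    _ ≤ ∑ j, |A i j| * ‖v‖ := Finset.sum_le_sum fun j _ =>
        mul_le_mul_of_nonneg_left (norm_le_pi_norm v j) (abs_nonneg _)
    _ = (∑ j, |A i j|) * ‖v‖ := by rw [Finset.sum_mul]
    _ ≤ ‖A‖ * ‖v‖ := mul_le_mul_of_nonneg_right hrow (norm_nonneg _)

end act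

lemma mact_sum {n m : ℕ} (A : Matrix (Fin n) (Fin n) ℝ) {ι : Type*} (s : Finset ι)
    (f : ι → Fin n → Fin m → ℝ) :
    mact A (∑ i ∈ s, f i) = ∑ i ∈ s, mact A (f i) := by
  funext l
  simp only [mact, Finset.sum_apply, Finset.smul_sum]
  rw [Finset.sum_comm]

lemma charpoly_eval_eq {n : ℕ} (A : Matrix (Fin n) (Fin n) ℂ) (μ : ℂ) :
    A.charpoly.eval μ = (μ • (1 : Matrix (Fin n) (Fin n) ℂ) - A).det := by
  rw [Matrix.charpoly, ← Polynomial.coe_evalRingHom, RingHom.map_det]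
  congr 1
  ext i j
  by_cases hij : i = j
  · subst hij; simp [charmatrix_apply_eq, Matrix.smul_apply, Matrix.one_apply]
  · simp [charmatrix_apply_ne _ _ _ hij, Matrix.smul_apply, Matrix.one_apply, hij]

lemma exists_pow_norm_lt {n : ℕ} (hn : 1 ≤ n) (D : Matrix (Fin n) (Fin n) ℝ) (β : ℝ)
    (heig : ∀ s ∈ (D.map (fun x => (x : ℂ))).charpoly.roots,
      s ≠ 1 ∧ 0 < β ∧ β < 2 * (1 - s.re) / ‖1 - s‖ ^ 2) :
    ∃ N : ℕ, 1 ≤ N ∧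
      ‖(((1 - β) • (1 : Matrix (Fin n) (Fin n) ℝ) + β • D) ^ N).map (fun x => (x : ℂ))‖₊ < 1 := by
  haveI : Nonempty (Fin n) := ⟨⟨0, hn⟩⟩
  set Dc : Matrix (Fin n) (Fin n) ℂ := D.map (fun x => (x : ℂ)) with hDc
  -- β is positive
  have hβpos : 0 < β := by
    have hcard : Dc.charpoly.roots.card = n := by
      rw [(Polynomial.splits_iff_card_roots).mp (IsAlgClosed.splits _),
        Matrix.charpoly_natDegree_eq_dim, Fintype.card_fin]
    obtain ⟨s, hs⟩ := Multiset.card_pos_iff_exists_mem.mp (by omega : 0 < Dc.charpoly.roots.card)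
    exact (heig s hs).2.1
  set P : Matrix (Fin n) (Fin n) ℝ := (1 - β) • 1 + β • D with hP
  set Pc : Matrix (Fin n) (Fin n) ℂ := ((1 : ℂ) - (β : ℂ)) • 1 + (β : ℂ) • Dc with hPc
  have hβc : (β : ℂ) ≠ 0 := by exact_mod_cast hβpos.ne'
  have hspec : ∀ μ ∈ spectrum ℂ Pc, ‖μ‖₊ < 1 := by
    intro μ hμ
    have hdet : (μ • (1 : Matrix (Fin n) (Fin n) ℂ) - Pc).det = 0 := by
      by_contra hne
      exact (spectrum.mem_iff.mp hμ) (by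
        rw [Algebra.algebraMap_eq_smul_one]
        exact (Matrix.isUnit_iff_isUnit_det _).mpr (isUnit_iff_ne_zero.mpr hne))
    set ν : ℂ := (μ - (1 - (β : ℂ))) / (β : ℂ) with hν
    have hμν : μ = (1 - (β : ℂ)) + (β : ℂ) * ν := by
      rw [hν, mul_div_cancel₀ _ hβc]; ring
    have hfac : μ • (1 : Matrix (Fin n) (Fin n) ℂ) - Pc
        = (β : ℂ) • (ν • (1 : Matrix (Fin n) (Fin n) ℂ) - Dc) := by
      ext i j
      by_cases hij : i = j <;>
        simp [hPc, Matrix.smul_apply, Matrix.sub_apply, Matrix.add_apply, Matrix.one_apply,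
          hij, hμν] <;> ring
    have hdet2 : (ν • (1 : Matrix (Fin n) (Fin n) ℂ) - Dc).det = 0 := by
      rw [hfac, Matrix.det_smul] at hdet
      exact (mul_eq_zero.mp hdet).resolve_left (pow_ne_zero _ hβc)
    have hroot : ν ∈ Dc.charpoly.roots := by
      rw [Polynomial.mem_roots']
      exact ⟨(Matrix.charpoly_monic Dc).ne_zero, by rw [Polynomial.IsRoot, charpoly_eval_eq, hdet2]⟩
    obtain ⟨hν1, -, hβlt⟩ := heig ν hroot
    -- numeric estimate
    have habs : ‖1 - ν‖ ^ 2 = (1 - ν.re) ^ 2 + ν.im ^ 2 := by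
      rw [Complex.sq_norm, Complex.normSq_apply]
      simp
      ring
    have hSpos : 0 < (1 - ν.re) ^ 2 + ν.im ^ 2 := by
      rcases lt_or_eq_of_le (by positivity : (0:ℝ) ≤ (1 - ν.re) ^ 2 + ν.im ^ 2) with h | h
      · exact h
      · exfalso
        apply hν1
        have h1 : (1 - ν.re) ^ 2 + ν.im ^ 2 = 0 := h.symm
        have : ν.re = 1 ∧ ν.im = 0 := by constructor <;> nlinarith [sq_nonneg (1 - ν.re), sq_nonneg ν.im]
        apply Complex.ext <;> simp [this.1, this.2]
    have hβS : β * ((1 - ν.re) ^ 2 + ν.im ^ 2) < 2 * (1 - ν.re) := by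
      rw [habs] at hβlt
      exact (lt_div_iff₀ hSpos).mp hβlt
    have hre : μ.re = 1 - β + β * ν.re := by rw [hμν]; simp
    have him : μ.im = β * ν.im := by rw [hμν]; simp
    have hnormsq : ‖μ‖ ^ 2 < 1 := by
      rw [Complex.sq_norm, Complex.normSq_apply, hre, him]
      nlinarith [hβpos, hSpos, hβS]
    have habs1 : ‖μ‖ < 1 := by nlinarith [norm_nonneg μ]
    rw [← NNReal.coe_lt_coe]
    simpa using habs1
  haveI : CompleteSpace (Matrix (Fin n) (Fin n) ℂ) := FiniteDimensional.complete ℂ _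
  have hrad : spectralRadius ℂ Pc < 1 := by
    simpa using spectrum.spectralRadius_lt_of_forall_lt (a := Pc) (r := 1) hspec
  have hg := spectrum.pow_nnnorm_pow_one_div_tendsto_nhds_spectralRadius Pc
  have hev : ∀ᶠ (k : ℕ) in Filter.atTop, (‖Pc ^ k‖₊ : ℝ≥0∞) ^ (1 / (k : ℝ)) < 1 :=
    hg.eventually_lt_const hrad
  obtain ⟨N, hNlt, hN1⟩ := (hev.and (Filter.eventually_ge_atTop 1)).exists
  have hPc_pow : ‖Pc ^ N‖₊ < 1 := by
    by_contra hge
    push_neg at hge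
    have h1 : (1 : ℝ≥0∞) ≤ (‖Pc ^ N‖₊ : ℝ≥0∞) ^ (1 / (N : ℝ)) := by
      calc (1 : ℝ≥0∞) = 1 ^ (1 / (N : ℝ)) := by rw [ENNReal.one_rpow]
        _ ≤ (‖Pc ^ N‖₊ : ℝ≥0∞) ^ (1 / (N : ℝ)) := by
            apply ENNReal.rpow_le_rpow (by exact_mod_cast hge) (by positivity)
    exact absurd hNlt (not_lt.mpr h1)
  refine ⟨N, hN1, ?_⟩
  have hPceq : P.map (fun x => (x : ℂ)) = Pc := by
    ext i j
    by_cases hij : i = j <;>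
      simp [hP, hPc, hDc, Matrix.add_apply, Matrix.smul_apply, Matrix.one_apply, Matrix.map_apply, hij] <;>
      push_cast <;> ring
  have hmapp : (P ^ N).map (fun x => (x : ℂ)) = Pc ^ N := by
    rw [← hPceq]
    exact map_pow (Complex.ofRealHom.mapMatrix) P N
  rw [hmapp]
  exact hPc_pow

end aux

set_option maxHeartbeats 2000000 in
/-- Refined velocity bound in the proof of Theorem 1: under the gain condition
`0 < β < 2(1 − Re s)/|1 − s|²` on the eigenvalues of `D`, there is a constant `C > 0`
depending only on `n`, `D` and `β` such that for every sampling period `h > 0`, every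
target velocity with `‖a₀‖_∞ ≤ γ₂`, and every solution of the velocity-error recursion
governed by `𝒫 = (1 − β)I + βD`, `limsup_k max_i ‖ῡ_i(k)‖_∞ ≤ C h γ₂`.
(Norms on `Fin m → ℝ` and `Fin n → Fin m → ℝ` are sup norms.) -/
theorem stmt_17 (n m : ℕ) (hn : 1 ≤ n) (hm : 1 ≤ m)
    (D : Matrix (Fin n) (Fin n) ℝ) (β : ℝ)
    (heig : ∀ s ∈ (D.map (fun x => (x : ℂ))).charpoly.roots,
      s ≠ 1 ∧ 0 < β ∧ β < 2 * (1 - s.re) / ‖1 - s‖ ^ 2) :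
    ∃ C > 0, ∀ (h : ℝ), 0 < h → ∀ (γ₂ : ℝ), 0 ≤ γ₂ →
      ∀ (υ₀ a₀ : ℝ → Fin m → ℝ),
        (∀ t, HasDerivAt υ₀ (a₀ t) t) → (∀ t, ‖a₀ t‖ ≤ γ₂) →
      ∀ (t₀ : ℝ) (t : ℕ → ℝ), (∀ k, t k = t₀ + k * h) →
      ∀ (υb : ℕ → Fin n → Fin m → ℝ),
        (∀ k, 1 ≤ k → ∀ i, υb (k + 1) i =
          (∑ j, (((1 - β) • (1 : Matrix (Fin n) (Fin n) ℝ) + β • D) i j) • υb k j)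
            + (υ₀ (t k) - υ₀ (t (k + 1)))) →
        Filter.limsup (fun k => ‖υb k‖) Filter.atTop ≤ C * h * γ₂ := by
  classical
  haveI : Nonempty (Fin n) := ⟨⟨0, hn⟩⟩
  set P : Matrix (Fin n) (Fin n) ℝ := (1 - β) • (1 : Matrix (Fin n) (Fin n) ℝ) + β • D with hP
  obtain ⟨N, hN1, hNlt⟩ := exists_pow_norm_lt hn D β heig
  have hN0 : 0 < N := hN1
  have hnorm_map : ∀ (A : Matrix (Fin n) (Fin n) ℝ), ‖A.map (fun x => (x : ℂ))‖₊ = ‖A‖₊ := by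
    intro A
    rw [Matrix.linfty_opNNNorm_def, Matrix.linfty_opNNNorm_def]
    congr 1
    funext i
    congr 1
    funext j
    simp [Matrix.map_apply]
  set ρ : ℝ := ‖P ^ N‖ with hρ
  have hρ0 : 0 ≤ ρ := norm_nonneg _
  have hρ1 : ρ < 1 := by
    rw [hnorm_map] at hNlt
    exact_mod_cast hNlt
  have h1ρ : 0 < 1 - ρ := by linarith
  set T : ℝ := ∑ i ∈ Finset.range N, ‖P ^ i‖ with hT
  have hT1 : (1 : ℝ) ≤ T := by
    have h0 : ‖P ^ 0‖ = 1 := by rw [pow_zero]; exact norm_one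
    calc (1 : ℝ) = ‖P ^ 0‖ := h0.symm
      _ ≤ T := Finset.single_le_sum (f := fun i => ‖P ^ i‖)
          (fun i _ => norm_nonneg _) (Finset.mem_range.mpr hN0)
  have hT0 : (0 : ℝ) < T := lt_of_lt_of_le one_pos hT1
  have hTple : ∀ r, r ≤ N → (∑ i ∈ Finset.range r, ‖P ^ i‖) ≤ T :=
    fun r hr => Finset.sum_le_sum_of_subset_of_nonneg
      (Finset.range_subset_range.mpr hr) (fun i _ _ => norm_nonneg _)
  have hPr : ∀ r, r < N → ‖P ^ r‖ ≤ T := fun r hr =>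
    Finset.single_le_sum (f := fun i => ‖P ^ i‖) (fun i _ => norm_nonneg _)
      (Finset.mem_range.mpr hr)
  have hCpos : 0 < T * T / (1 - ρ) + T + 1 := by
    have h1 : 0 ≤ T * T / (1 - ρ) := div_nonneg (mul_nonneg hT0.le hT0.le) h1ρ.le
    linarith
  refine ⟨T * T / (1 - ρ) + T + 1, hCpos, ?_⟩
  intro h hh γ₂ hγ₂ υ₀ a₀ hderiv hbound t₀ t ht υb hrec
  set w : ℕ → Fin n → Fin m → ℝ := fun k _ => υ₀ (t k) - υ₀ (t (k + 1)) with hw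
  have hwk : ∀ k, ‖w k‖ ≤ γ₂ * h := by
    intro k
    refine (pi_norm_le_iff_of_nonneg (mul_nonneg hγ₂ hh.le)).mpr fun _ => ?_
    have hmvt := Convex.norm_image_sub_le_of_norm_hasDerivWithin_le
      (f := υ₀) (f' := a₀) (C := γ₂) (s := Set.univ)
      (fun x _ => (hderiv x).hasDerivWithinAt) (fun x _ => hbound x) convex_univ
      (Set.mem_univ (t (k + 1))) (Set.mem_univ (t k))
    have htk : t k - t (k + 1) = -h := by rw [ht, ht]; push_cast; ring
    have : ‖t k - t (k + 1)‖ = h := by rw [htk, norm_neg, Real.norm_eq_abs, abs_of_pos hh]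
    calc ‖υ₀ (t k) - υ₀ (t (k + 1))‖ ≤ γ₂ * ‖t k - t (k + 1)‖ := hmvt
      _ = γ₂ * h := by rw [this]
  have hrecF : ∀ k, 1 ≤ k → υb (k + 1) = mact P (υb k) + w k := by
    intro k hk
    funext i
    rw [show (mact P (υb k) + w k) i = mact P (υb k) i + w k i from rfl]
    exact hrec k hk i
  have hunroll : ∀ k, 1 ≤ k → ∀ j, υb (k + j) =
      mact (P ^ j) (υb k) + ∑ i ∈ Finset.range j, mact (P ^ (j - 1 - i)) (w (k + i)) := by
    intro k hk
    intro j
    induction j with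
    | zero => simp [mact_one]
    | succ j ih =>
      have hkj : 1 ≤ k + j := le_trans hk (Nat.le_add_right k j)
      have hstep : υb (k + (j + 1)) = mact P (υb (k + j)) + w (k + j) := by
        rw [show k + (j + 1) = (k + j) + 1 from rfl]
        exact hrecF (k + j) hkj
      have hsum : ∑ i ∈ Finset.range (j + 1), mact (P ^ (j + 1 - 1 - i)) (w (k + i))
          = (∑ i ∈ Finset.range j, mact P (mact (P ^ (j - 1 - i)) (w (k + i)))) + w (k + j) := by
        rw [Finset.sum_range_succ]
        congr 1
        · refine Finset.sum_congr rfl fun i hi => ?_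
          have hij : i < j := Finset.mem_range.mp hi
          have he : j + 1 - 1 - i = (j - 1 - i) + 1 := by omega
          rw [he, pow_succ', mact_mul]
        · rw [show j + 1 - 1 - j = 0 from by omega, pow_zero, mact_one]
      rw [hstep, ih, mact_add, mact_sum, ← mact_mul, ← pow_succ', hsum, add_assoc]
  have hbnd : ∀ k, 1 ≤ k → ∀ j, ‖υb (k + j)‖ ≤
      ‖P ^ j‖ * ‖υb k‖ + (∑ i ∈ Finset.range j, ‖P ^ i‖) * (γ₂ * h) := by
    intro k hk j
    rw [hunroll k hk j]
    calc ‖mact (P ^ j) (υb k) + ∑ i ∈ Finset.range j, mact (P ^ (j - 1 - i)) (w (k + i))‖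
        ≤ ‖mact (P ^ j) (υb k)‖ + ‖∑ i ∈ Finset.range j, mact (P ^ (j - 1 - i)) (w (k + i))‖ :=
          norm_add_le _ _
      _ ≤ ‖P ^ j‖ * ‖υb k‖ + (∑ i ∈ Finset.range j, ‖P ^ i‖) * (γ₂ * h) := by
          apply add_le_add (norm_mact_le _ _)
          calc ‖∑ i ∈ Finset.range j, mact (P ^ (j - 1 - i)) (w (k + i))‖
              ≤ ∑ i ∈ Finset.range j, ‖mact (P ^ (j - 1 - i)) (w (k + i))‖ := norm_sum_le _ _
            _ ≤ ∑ i ∈ Finset.range j, ‖P ^ (j - 1 - i)‖ * (γ₂ * h) := by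
                apply Finset.sum_le_sum
                intro i _
                exact le_trans (norm_mact_le _ _)
                  (mul_le_mul_of_nonneg_left (hwk _) (norm_nonneg _))
            _ = (∑ i ∈ Finset.range j, ‖P ^ (j - 1 - i)‖) * (γ₂ * h) := by
                rw [Finset.sum_mul]
            _ = (∑ i ∈ Finset.range j, ‖P ^ i‖) * (γ₂ * h) := by
                rw [Finset.sum_range_reflect (fun i => ‖P ^ i‖) j]
  set E : ℝ := T * (γ₂ * h) / (1 - ρ) with hE
  have hE0 : 0 ≤ E :=
    div_nonneg (mul_nonneg hT0.le (mul_nonneg hγ₂ hh.le)) h1ρ.le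
  have hEeq : E * (1 - ρ) = T * (γ₂ * h) := by
    rw [hE, div_mul_cancel₀ _ (ne_of_gt h1ρ)]
  have hy : ∀ q, ‖υb (1 + N * q)‖ ≤ ‖υb 1‖ * ρ ^ q + E := by
    intro q
    induction q with
    | zero =>
      simp only [Nat.mul_zero, Nat.add_zero, pow_zero, mul_one]
      linarith [hE0]
    | succ q ih =>
      have hidx : 1 + N * (q + 1) = (1 + N * q) + N := by ring
      have hb := hbnd (1 + N * q) (Nat.le_add_right 1 _) N
      rw [← hidx, ← hρ, ← hT] at hb
      have h2 : ρ * ‖υb (1 + N * q)‖ ≤ ρ * (‖υb 1‖ * ρ ^ q + E) :=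
        mul_le_mul_of_nonneg_left ih hρ0
      have h3 : (∑ i ∈ Finset.range N, ‖P ^ i‖) * (γ₂ * h) ≤ T * (γ₂ * h) := le_of_eq rfl
      have hρE : ρ * E + T * (γ₂ * h) = E := by nlinarith [hEeq]
      calc ‖υb (1 + N * (q + 1))‖ ≤ ρ * ‖υb (1 + N * q)‖ + T * (γ₂ * h) := by
            linarith [hb]
        _ ≤ ρ * (‖υb 1‖ * ρ ^ q + E) + T * (γ₂ * h) := by linarith
        _ = ‖υb 1‖ * ρ ^ (q + 1) + (ρ * E + T * (γ₂ * h)) := by ring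
        _ = ‖υb 1‖ * ρ ^ (q + 1) + E := by rw [hρE]
  have hgen : ∀ k, 1 ≤ k → ‖υb k‖ ≤
      T * (‖υb 1‖ * ρ ^ ((k - 1) / N) + E) + T * (γ₂ * h) := by
    intro k hk1
    set q := (k - 1) / N with hq
    set r := (k - 1) % N with hr
    have hrN : r < N := Nat.mod_lt _ hN0
    have h1 : N * q + r = k - 1 := Nat.div_add_mod (k - 1) N
    have hkeq : k = (1 + N * q) + r := by
      rw [add_assoc, h1]
      exact (Nat.add_sub_cancel' hk1).symm
    have hb := hbnd (1 + N * q) (Nat.le_add_right 1 _) r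
    rw [← hkeq] at hb
    have hy' := hy q
    have hterm1 : ‖P ^ r‖ * ‖υb (1 + N * q)‖ ≤ T * (‖υb 1‖ * ρ ^ q + E) :=
      mul_le_mul (hPr r hrN) hy' (norm_nonneg _) (le_of_lt hT0)
    have hterm2 : (∑ i ∈ Finset.range r, ‖P ^ i‖) * (γ₂ * h) ≤ T * (γ₂ * h) :=
      mul_le_mul_of_nonneg_right (hTple r (le_of_lt hrN)) (mul_nonneg hγ₂ hh.le)
    linarith
  -- limsup
  have hdiv : Filter.Tendsto (fun k : ℕ => (k - 1) / N) Filter.atTop Filter.atTop := by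
    apply Filter.tendsto_atTop_atTop.mpr
    intro b
    refine ⟨N * b + 1, fun a ha => ?_⟩
    rw [Nat.le_div_iff_mul_le hN0, mul_comm]
    exact Nat.le_pred_of_lt (Nat.lt_of_succ_le ha)
  have htend0 : Filter.Tendsto (fun k : ℕ => ρ ^ ((k - 1) / N)) Filter.atTop (nhds 0) :=
    (tendsto_pow_atTop_nhds_zero_of_lt_one hρ0 hρ1).comp hdiv
  set g : ℕ → ℝ := fun k => T * (‖υb 1‖ * ρ ^ ((k - 1) / N) + E) + T * (γ₂ * h) with hg
  have hgt : Filter.Tendsto g Filter.atTop (nhds (T * (‖υb 1‖ * 0 + E) + T * (γ₂ * h))) := by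
    apply Filter.Tendsto.add _ tendsto_const_nhds
    apply Filter.Tendsto.mul tendsto_const_nhds
    exact (Filter.Tendsto.mul tendsto_const_nhds htend0).add tendsto_const_nhds
  have hev : ∀ᶠ k in Filter.atTop, ‖υb k‖ ≤ g k :=
    Filter.eventually_atTop.mpr ⟨1, fun k hk => hgen k hk⟩
  have hls : Filter.limsup (fun k => ‖υb k‖) Filter.atTop ≤
      T * (‖υb 1‖ * 0 + E) + T * (γ₂ * h) := by
    have hcob : Filter.IsCoboundedUnder (· ≤ ·) Filter.atTop (fun k => ‖υb k‖) :=
      Filter.isCoboundedUnder_le_of_le Filter.atTop (fun k => norm_nonneg _)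
    calc Filter.limsup (fun k => ‖υb k‖) Filter.atTop ≤ Filter.limsup g Filter.atTop :=
          Filter.limsup_le_limsup hev hcob hgt.isBoundedUnder_le
      _ = T * (‖υb 1‖ * 0 + E) + T * (γ₂ * h) := hgt.limsup_eq
  have hfinal : T * (‖υb 1‖ * 0 + E) + T * (γ₂ * h) ≤ (T * T / (1 - ρ) + T + 1) * h * γ₂ := by
    have hEval : T * (‖υb 1‖ * 0 + E) + T * (γ₂ * h) = (T * T / (1 - ρ) + T) * (h * γ₂) := by
      rw [hE]; ring
    rw [hEval]
    have hhγ : 0 ≤ h * γ₂ := mul_nonneg hh.le hγ₂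
    nlinarith [hhγ]
  exact le_trans hls hfinal
end
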